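/- arXiv:1411.3880 — 2 statements merged into one kernel-verified Lean document; each statement's English description precedes it below -/
import Mathlib

section
/- Let P=(S,A,δ,F,s0) be a probabilistic finite automaton and let G be the reduction POMDP built from P, with target set T={target}. If there exists a finite word w ∈ A* that is accepted by P with probability strictly greater than 1/2, then the optimal cost optCost in G is -∞; that is, for every real number τ < 0 there exists an almost-sure winning strategy σ for Reach(T) in G with Val(σ) < τ. -/
open Finset Filter
open scoped Classical

set_option linter.unusedSectionVars false
set_option linter.unnecessarySeqFocus false

noncomputable section

/-- A finite history of a play: the current state together with the
(reversed) list of past steps; an entry `(a, s')` means: the action `a`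
was taken from the state `s'` (leading to the next recorded state). -/
abbrev Hist (S A : Type) := S × List (A × S)

/-- The observation–action sequence of a history. -/
def obsHist {S A Z : Type} (O : S → Z) (h : Hist S A) : Z × List (A × Z) :=
  (O h.1, h.2.map fun p => (p.1, O p.2))

/-- An observation-based (randomized, history-dependent) strategy. -/
structure Strategy (S A Z : Type) [Fintype A] (O : S → Z) where
  act : Hist S A → A → ℝ
  act_nonneg : ∀ h a, 0 ≤ act h a
  act_sum : ∀ h, ∑ a, act h a = 1
  obsBased : ∀ h h', obsHist O h = obsHist O h' → act h = act h'

/-- A partially observable Markov decision process. -/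
structure POMDP (S A Z : Type) [Fintype S] [Fintype A] [Fintype Z] where
  δ : S → A → S → ℝ
  δ_nonneg : ∀ s a s', 0 ≤ δ s a s'
  δ_sum : ∀ s a, ∑ s', δ s a s' = 1
  obs : S → Z
  init : S → ℝ
  init_nonneg : ∀ s, 0 ≤ init s
  init_sum : ∑ s, init s = 1
  init_obs : ∀ s s', 0 < init s → 0 < init s' → obs s = obs s'

namespace POMDP

variable {S A Z : Type} [Fintype S] [Fintype A] [Fintype Z]

/-- The target set `T` consists of absorbing states. -/
def Absorbing (M : POMDP S A Z) (T : Set S) : Prop :=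
  ∀ t ∈ T, ∀ a, M.δ t a t = 1

/-- Probability that after `n` steps the process has followed exactly the
history `(s, l)` (so `l` has length `n`). -/
def hprobAux (M : POMDP S A Z) (σ : Strategy S A Z M.obs) : ℕ → S → List (A × S) → ℝ
  | 0, s, l => if l = [] then M.init s else 0
  | n+1, s, l =>
    match l with
    | [] => 0
    | (a, s') :: rest => hprobAux M σ n s' rest * σ.act (s', rest) a * M.δ s' a s

def hprob (M : POMDP S A Z) (σ : Strategy S A Z M.obs) (n : ℕ) (h : Hist S A) : ℝ :=
  M.hprobAux σ n h.1 h.2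

/-- The state sequence of a history visits the set `T`. -/
def visitsT (T : Set S) (h : Hist S A) : Prop :=
  h.1 ∈ T ∨ ∃ p ∈ h.2, p.2 ∈ T

/-- Probability of reaching `T` within the first `n` steps. -/
def probReachBy (M : POMDP S A Z) (T : Set S) (σ : Strategy S A Z M.obs) (n : ℕ) : ℝ :=
  ∑' h : Hist S A, if visitsT T h then M.hprob σ n h else 0

/-- Probability of the reachability objective `Reach(T)`. -/
def probReach (M : POMDP S A Z) (T : Set S) (σ : Strategy S A Z M.obs) : ℝ :=
  ⨆ n, M.probReachBy T σ n

/-- The strategy `σ` is almost-sure winning for `Reach(T)`. -/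
def AlmostSure (M : POMDP S A Z) (T : Set S) (σ : Strategy S A Z M.obs) : Prop :=
  M.probReach T σ = 1

/-- Accumulated cost along a history. -/
def totalCostAux (c : S → A → ℝ) : S → List (A × S) → ℝ
  | _, [] => 0
  | _, (a, s') :: rest => totalCostAux c s' rest + c s' a

def totalCostH (c : S → A → ℝ) (h : Hist S A) : ℝ := totalCostAux c h.1 h.2

/-- Expected total cost of the first `n` steps, i.e. `E[Total_{n-1}]`
(in particular `E[Total_k] = expTotalSteps M c σ (k+1)`). -/
def expTotalSteps (M : POMDP S A Z) (c : S → A → ℝ) (σ : Strategy S A Z M.obs) (n : ℕ) : ℝ :=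
  ∑' h : Hist S A, M.hprob σ n h * totalCostH c h

/-- The value `Val(σ) = E[Total]` of a strategy, as the limit (limsup) of the
expected costs of the finite prefixes. -/
def Val (M : POMDP S A Z) (c : S → A → ℝ) (σ : Strategy S A Z M.obs) : EReal :=
  Filter.limsup (fun n => ((M.expTotalSteps c σ n : ℝ) : EReal)) Filter.atTop

/-- `optCost`: the infimum of the values of almost-sure winning strategies. -/
def optCost (M : POMDP S A Z) (T : Set S) (c : S → A → ℝ) : EReal :=
  ⨅ σ : {σ : Strategy S A Z M.obs // M.AlmostSure T σ}, M.Val c σ.1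

end POMDP

/-- A probabilistic finite automaton. -/
structure PFA (S A : Type) [Fintype S] [Fintype A] where
  δ : S → A → S → ℝ
  δ_nonneg : ∀ s a s', 0 ≤ δ s a s'
  δ_sum : ∀ s a, ∑ s', δ s a s' = 1
  final : Finset S
  s0 : S

def dirac {X : Type} [DecidableEq X] (x : X) : X → ℝ := fun y => if y = x then 1 else 0

lemma dirac_nonneg {X : Type} [DecidableEq X] (x y : X) : 0 ≤ dirac x y := by
  unfold dirac; split_ifs <;> norm_num

lemma dirac_sum {X : Type} [Fintype X] [DecidableEq X] (x : X) : ∑ y, dirac x y = 1 := by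
  simp [dirac]

namespace PFA

variable {S A : Type} [Fintype S] [Fintype A] [DecidableEq S] [DecidableEq A]

/-- One step of the forward distribution of the PFA. -/
def stepD (P : PFA S A) (d : S → ℝ) (a : A) : S → ℝ := fun s' => ∑ s, d s * P.δ s a s'

/-- Distribution over states after reading the word `w` from `s0`. -/
def wordDist (P : PFA S A) (w : List A) : S → ℝ := w.foldl P.stepD (dirac P.s0)

/-- Probability that the word `w` is accepted (run ends in a final state). -/
def accProb (P : PFA S A) (w : List A) : ℝ := ∑ s ∈ P.final, P.wordDist w s

/-- States of the reduction POMDP: `(s,1)` = `inl (s, true)`, `(s,-1)` = `inl (s, false)`,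
`good`, `bad`, `target`, `losing` = `inr 0,1,2,3`. -/
abbrev RSt (S : Type) := S × Bool ⊕ Fin 4

/-- Actions of the reduction POMDP: the PFA letters, and `# = inr 0`,
`$ = inr 1`, `√ = inr 2`. -/
abbrev RAct (A : Type) := A ⊕ Fin 3

variable (S) in
def stGood : RSt S := Sum.inr 0
variable (S) in
def stBad : RSt S := Sum.inr 1
variable (S) in
def stTarget : RSt S := Sum.inr 2
variable (S) in
def stLosing : RSt S := Sum.inr 3

def embedPos (p : S → ℝ) : RSt S → ℝ
  | Sum.inl (s, true) => p s
  | Sum.inl (_, false) => 0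
  | Sum.inr _ => 0

lemma embedPos_nonneg {p : S → ℝ} (hp : ∀ s, 0 ≤ p s) (t : RSt S) : 0 ≤ embedPos p t := by
  rcases t with ⟨s, _ | _⟩ | i <;> simp [embedPos] <;> exact hp s

lemma embedPos_sum (p : S → ℝ) : ∑ t, embedPos p t = ∑ s, p s := by
  rw [Fintype.sum_sum_type, Fintype.sum_prod_type]
  have h1 : ∀ s : S, ∑ b : Bool, embedPos p (Sum.inl (s, b)) = p s := by
    intro s; rw [Fintype.sum_bool]; simp [embedPos]
  have h2 : ∑ i : Fin 4, embedPos p (Sum.inr i) = 0 := by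
    simp [embedPos]
  rw [h2, Finset.sum_congr rfl fun s _ => h1 s, add_zero]

/-- Transition function of the reduction POMDP. -/
def redδ (P : PFA S A) : RSt S → RAct A → RSt S → ℝ
  | Sum.inl (s, true), Sum.inr j =>
      if j = 1 then dirac (Sum.inl (s, false))
      else if j = 2 then (if s = P.s0 then dirac (stTarget S) else dirac (stLosing S))
      else dirac (stLosing S)
  | Sum.inl (_, true), Sum.inl _ => dirac (stLosing S)
  | Sum.inl (s, false), Sum.inl a => embedPos (P.δ s a)
  | Sum.inl (s, false), Sum.inr j =>
      if j = 0 then (if s ∈ P.final then dirac (stGood S) else dirac (stBad S))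
      else dirac (stLosing S)
  | Sum.inr i, Sum.inl _ =>
      if i = 2 then dirac (stTarget S) else dirac (stLosing S)
  | Sum.inr i, Sum.inr j =>
      if i = 2 then dirac (stTarget S)
      else if i = 3 then dirac (stLosing S)
      else if j = 0 then dirac (Sum.inl (P.s0, true)) else dirac (stLosing S)

lemma redδ_nonneg (P : PFA S A) (st : RSt S) (act : RAct A) (t : RSt S) :
    0 ≤ redδ P st act t := by
  rcases st with ⟨s, _ | _⟩ | i <;> rcases act with a | j <;>
    simp only [redδ] <;> (try split_ifs) <;>
    first
      | exact dirac_nonneg _ _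
      | exact embedPos_nonneg (P.δ_nonneg s a) t

lemma redδ_sum (P : PFA S A) (st : RSt S) (act : RAct A) :
    ∑ t, redδ P st act t = 1 := by
  rcases st with ⟨s, _ | _⟩ | i <;> rcases act with a | j <;>
    simp only [redδ] <;> (try split_ifs) <;>
    first
      | exact dirac_sum _
      | (rw [embedPos_sum]; exact P.δ_sum s a)

/-- The cost function of the reduction POMDP (cost of the source state,
charged on all outgoing transitions). -/
def costRed : RSt S → RAct A → ℝ
  | Sum.inl (_, true), _ => 1
  | Sum.inl (_, false), _ => -1
  | Sum.inr i, _ => if i = 0 then -1 else if i = 1 then 1 else if i = 3 then 1 else 0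

/-- The reduction POMDP built from the PFA `P`: single observation,
initial state `(s0, 1)`. -/
def redPOMDP (P : PFA S A) : POMDP (RSt S) (RAct A) Unit where
  δ := redδ P
  δ_nonneg := redδ_nonneg P
  δ_sum := redδ_sum P
  obs := fun _ => ()
  init := dirac (Sum.inl (P.s0, true))
  init_nonneg := dirac_nonneg _
  init_sum := dirac_sum _
  init_obs := fun _ _ _ _ => rfl

variable (S) in
/-- The target set of the reduction POMDP. -/
def TRed : Set (RSt S) := {stTarget S}

end PFA

/-- The memory state of a finite-memory strategy after a history. -/
def memAfter {S A Z Mem : Type} (O : S → Z) (σu : Mem → Z → A → Mem) (m0 : Mem) :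
    S → List (A × S) → Mem
  | _, [] => m0
  | s, (a, s') :: rest => σu (memAfter O σu m0 s' rest) (O s) a

/-- A strategy is pure finite-memory if it is induced by a deterministic
finite-memory structure `(σu, σn, Mem, m0)`. -/
def IsPureFinMem {S A Z : Type} [Fintype A] (O : S → Z) (σ : Strategy S A Z O) : Prop :=
  ∃ (Mem : Type) (_ : Finite Mem) (σu : Mem → Z → A → Mem) (σn : Mem → A) (m0 : Mem),
    ∀ (h : Hist S A) (a : A),
      σ.act h a = if a = σn (memAfter O σu m0 h.1 h.2) then 1 else 0

/-! ### Auxiliary development -/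

section General

variable {S A Z : Type} [Fintype S] [Fintype A] [Fintype Z]

/-- The finset of lists of a given length over a fintype. -/
def listFinset (X : Type) [Fintype X] [DecidableEq X] : ℕ → Finset (List X)
  | 0 => {[]}
  | n+1 => ((Finset.univ : Finset X) ×ˢ listFinset X n).image (fun p => p.1 :: p.2)

lemma mem_listFinset {X : Type} [Fintype X] [DecidableEq X] (n : ℕ) (l : List X) :
    l ∈ listFinset X n ↔ l.length = n := by
  induction n generalizing l with
  | zero => simp [listFinset, List.length_eq_zero_iff]
  | succ n ih =>
    simp only [listFinset, Finset.mem_image, Finset.mem_product, Finset.mem_univ, true_and]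
    constructor
    · rintro ⟨⟨x, rest⟩, hr, rfl⟩
      simp [(ih rest).1 hr]
    · intro hl
      match l with
      | [] => simp at hl
      | x :: rest =>
        exact ⟨(x, rest), (ih rest).2 (by simpa using hl), rfl⟩

variable {M : POMDP S A Z} {σ : Strategy S A Z M.obs}

lemma hprobAux_len {n : ℕ} {s : S} {l : List (A × S)} (h : M.hprobAux σ n s l ≠ 0) :
    l.length = n := by
  induction n generalizing s l with
  | zero =>
    simp only [POMDP.hprobAux] at h
    by_cases hl : l = []
    · simp [hl]
    · simp [hl] at h
  | succ n ih =>
    match l with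
    | [] => simp [POMDP.hprobAux] at h
    | (a, s') :: rest =>
      simp only [POMDP.hprobAux] at h
      have h1 : M.hprobAux σ n s' rest ≠ 0 := by
        intro h0; rw [h0] at h; simp at h
      simp [ih h1]

lemma tsum_hist_eq_sum [DecidableEq S] [DecidableEq A]
    (g : Hist S A → ℝ) (n : ℕ) (h0 : ∀ h : Hist S A, h.2.length ≠ n → g h = 0) :
    ∑' h : Hist S A, g h
      = ∑ h ∈ (Finset.univ : Finset S) ×ˢ listFinset (A × S) n, g h := by
  refine tsum_eq_sum ?_
  intro h hh
  refine h0 h ?_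
  intro hlen
  exact hh (by simp [Finset.mem_product, mem_listFinset, hlen])

/-- A strategy that depends only on the number of steps so far. -/
def timeStrat (M : POMDP S A Z) (f : ℕ → A → ℝ)
    (hf1 : ∀ n a, 0 ≤ f n a) (hf2 : ∀ n, ∑ a, f n a = 1) : Strategy S A Z M.obs where
  act h := f h.2.length
  act_nonneg h a := hf1 _ a
  act_sum h := hf2 _
  obsBased h h' e := by
    have h2 := congrArg (fun q : Z × List (A × Z) => q.2.length) e
    simp only [obsHist, List.length_map] at h2
    exact congrArg f h2

variable [DecidableEq S] [DecidableEq A]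

/-- The distribution over states after `n` steps. -/
def stateDist (M : POMDP S A Z) (σ : Strategy S A Z M.obs) (n : ℕ) (s : S) : ℝ :=
  ∑ l ∈ listFinset (A × S) n, M.hprobAux σ n s l

lemma stateDist_zero (s : S) : stateDist M σ 0 s = M.init s := by
  simp [stateDist, listFinset, POMDP.hprobAux]

lemma stateDist_succ (f : ℕ → A → ℝ) (hf1 : ∀ n a, 0 ≤ f n a) (hf2 : ∀ n, ∑ a, f n a = 1)
    (n : ℕ) (s' : S) :
    stateDist M (timeStrat M f hf1 hf2) (n+1) s'
      = ∑ s, ∑ a, stateDist M (timeStrat M f hf1 hf2) n s * f n a * M.δ s a s' := by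
  set σ := timeStrat M f hf1 hf2 with hσ
  have hinj : ∀ p ∈ (Finset.univ : Finset (A × S)) ×ˢ listFinset (A × S) n,
      ∀ q ∈ (Finset.univ : Finset (A × S)) ×ˢ listFinset (A × S) n,
      (fun p : (A × S) × List (A × S) => p.1 :: p.2) p
        = (fun p : (A × S) × List (A × S) => p.1 :: p.2) q → p = q := by
    intro p _ q _ h
    simp only [List.cons.injEq] at h
    exact Prod.ext h.1 h.2
  rw [stateDist, listFinset, Finset.sum_image hinj]
  rw [Finset.sum_product]
  rw [Fintype.sum_prod_type]
  rw [Finset.sum_comm]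
  refine Finset.sum_congr rfl fun s _ => ?_
  refine Finset.sum_congr rfl fun a _ => ?_
  rw [stateDist, Finset.sum_mul, Finset.sum_mul]
  refine Finset.sum_congr rfl fun l hl => ?_
  have hlen : l.length = n := (mem_listFinset n l).1 hl
  show M.hprobAux σ n s l * σ.act (s, l) a * M.δ s a s' = _
  have : σ.act (s, l) a = f n a := by
    rw [hσ]; show f l.length a = f n a; rw [hlen]
  rw [this]

lemma expTotalSteps_zero (c : S → A → ℝ) :
    M.expTotalSteps c σ 0 = 0 := by
  rw [POMDP.expTotalSteps, tsum_hist_eq_sum _ 0 (fun h hh => ?_)]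
  · refine Finset.sum_eq_zero fun h hh => ?_
    rcases h with ⟨s, l⟩
    have : l ∈ listFinset (A × S) 0 := (Finset.mem_product.1 hh).2
    have hl : l = [] := by simpa [listFinset] using this
    subst hl
    simp [POMDP.totalCostH, POMDP.totalCostAux]
  · by_cases hz : M.hprob σ 0 h = 0
    · rw [hz]; ring
    · exact absurd (hprobAux_len hz) hh

lemma expTotalSteps_succ (f : ℕ → A → ℝ) (hf1 : ∀ n a, 0 ≤ f n a) (hf2 : ∀ n, ∑ a, f n a = 1)
    (c : S → A → ℝ) (cst : S → ℝ) (hc : ∀ s a, c s a = cst s) (n : ℕ) :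
    M.expTotalSteps c (timeStrat M f hf1 hf2) (n+1)
      = M.expTotalSteps c (timeStrat M f hf1 hf2) n
        + ∑ s, stateDist M (timeStrat M f hf1 hf2) n s * cst s := by
  set σ := timeStrat M f hf1 hf2 with hσ
  have key : ∀ m : ℕ, M.expTotalSteps c σ m
      = ∑ h ∈ (Finset.univ : Finset S) ×ˢ listFinset (A × S) m,
          M.hprob σ m h * POMDP.totalCostH c h := by
    intro m
    refine tsum_hist_eq_sum _ m fun h hh => ?_
    by_cases hz : M.hprob σ m h = 0
    · rw [hz]; ring
    · exact absurd (hprobAux_len hz) hh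
  rw [key (n+1), key n]
  have hinj : ∀ p ∈ (Finset.univ : Finset (A × S)) ×ˢ listFinset (A × S) n,
      ∀ q ∈ (Finset.univ : Finset (A × S)) ×ˢ listFinset (A × S) n,
      (fun p : (A × S) × List (A × S) => p.1 :: p.2) p
        = (fun p : (A × S) × List (A × S) => p.1 :: p.2) q → p = q := by
    intro p _ q _ h
    simp only [List.cons.injEq] at h
    exact Prod.ext h.1 h.2
  rw [Finset.sum_product]
  rw [Finset.sum_congr rfl fun (s' : S) _ => by
    rw [listFinset, Finset.sum_image hinj, Finset.sum_product]]
  have expand : ∀ s' : S, ∀ p : A × S, ∀ l ∈ listFinset (A × S) n,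
      M.hprob σ (n+1) (s', p :: l) * POMDP.totalCostH c (s', p :: l)
        = M.hprobAux σ n p.2 l * f n p.1 * M.δ p.2 p.1 s'
            * (POMDP.totalCostAux c p.2 l + cst p.2) := by
    rintro s' ⟨a, s⟩ l hl
    have hlen : l.length = n := (mem_listFinset n l).1 hl
    show M.hprobAux σ n s l * σ.act (s, l) a * M.δ s a s'
        * (POMDP.totalCostAux c s l + c s a) = _
    have h1 : σ.act (s, l) a = f n a := by
      rw [hσ]; show f l.length a = f n a; rw [hlen]
    rw [h1, hc]
  calc ∑ s' : S, ∑ p : A × S, ∑ l ∈ listFinset (A × S) n,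
        M.hprob σ (n+1) (s', p :: l) * POMDP.totalCostH c (s', p :: l)
      = ∑ s' : S, ∑ p : A × S, ∑ l ∈ listFinset (A × S) n,
          M.hprobAux σ n p.2 l * f n p.1 * M.δ p.2 p.1 s'
            * (POMDP.totalCostAux c p.2 l + cst p.2) := by
        refine Finset.sum_congr rfl fun s' _ => Finset.sum_congr rfl fun p _ =>
          Finset.sum_congr rfl fun l hl => expand s' p l hl
    _ = ∑ p : A × S, ∑ l ∈ listFinset (A × S) n,
          M.hprobAux σ n p.2 l * f n p.1 * (POMDP.totalCostAux c p.2 l + cst p.2) := by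
        rw [Finset.sum_comm]
        refine Finset.sum_congr rfl fun p _ => ?_
        rw [Finset.sum_comm]
        refine Finset.sum_congr rfl fun l _ => ?_
        rw [← Finset.sum_mul]
        rw [show ∀ x y : ℝ, (∑ s', M.hprobAux σ n p.2 l * f n p.1 * M.δ p.2 p.1 s') * (x + y)
          = (M.hprobAux σ n p.2 l * f n p.1 * ∑ s', M.δ p.2 p.1 s') * (x+y) from
          fun x y => by rw [← Finset.mul_sum]]
        rw [M.δ_sum]
        ring
    _ = ∑ h ∈ (Finset.univ : Finset S) ×ˢ listFinset (A × S) n,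
          M.hprob σ n h * POMDP.totalCostH c h + ∑ s, stateDist M σ n s * cst s := by
        rw [Fintype.sum_prod_type]
        rw [Finset.sum_comm]
        rw [Finset.sum_product]
        rw [← Finset.sum_add_distrib]
        refine Finset.sum_congr rfl fun s _ => ?_
        rw [Finset.sum_comm]
        rw [stateDist, Finset.sum_mul, ← Finset.sum_add_distrib]
        refine Finset.sum_congr rfl fun l hl => ?_
        have hmass : ∑ a, f n a = 1 := hf2 n
        rw [show ∑ a : A, M.hprobAux σ n s l * f n a * (POMDP.totalCostAux c s l + cst s)
          = (∑ a : A, f n a) * (M.hprobAux σ n s l * (POMDP.totalCostAux c s l + cst s)) from by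
            rw [Finset.sum_mul]; exact Finset.sum_congr rfl fun a _ => by ring]
        rw [hmass]
        show (1:ℝ) * _ = M.hprobAux σ n s l * POMDP.totalCostAux c s l + _
        ring

end General


section Reachability

variable {S A Z : Type} [Fintype S] [Fintype A] [Fintype Z]
variable {M : POMDP S A Z} {σ : Strategy S A Z M.obs}

lemma hprob_visits {t : S} (habs : ∀ a s', M.δ t a s' ≠ 0 → s' = t) :
    ∀ (l : List (A × S)) (n : ℕ) (s : S), M.hprobAux σ n s l ≠ 0 →
      (∃ p ∈ l, p.2 = t) → s = t := by
  intro l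
  induction l with
  | nil => rintro n s _ ⟨p, hp, _⟩; simp at hp
  | cons q rest ih =>
    rintro n s hne ⟨p, hp, hpt⟩
    obtain ⟨a, s'⟩ := q
    match n with
    | 0 => simp [POMDP.hprobAux] at hne
    | n+1 =>
      simp only [POMDP.hprobAux] at hne
      have h1 : M.hprobAux σ n s' rest ≠ 0 := fun h0 => hne (by rw [h0]; ring)
      have h3 : M.δ s' a s ≠ 0 := fun h0 => hne (by rw [h0]; ring)
      have hs' : s' = t := by
        rcases List.mem_cons.1 hp with rfl | hmem
        · exact hpt
        · exact ih n s' h1 ⟨p, hmem, hpt⟩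
      subst hs'
      exact habs a s h3

variable [DecidableEq S] [DecidableEq A]

lemma probReachBy_eq_stateDist {t : S} (habs : ∀ a s', M.δ t a s' ≠ 0 → s' = t) (n : ℕ) :
    M.probReachBy {t} σ n = stateDist M σ n t := by
  unfold POMDP.probReachBy
  have hcongr : ∀ h : Hist S A,
      (if POMDP.visitsT {t} h then M.hprob σ n h else 0)
        = (if h.1 = t then M.hprob σ n h else 0) := by
    intro h
    by_cases hz : M.hprob σ n h = 0
    · rw [hz]; simp
    · have : POMDP.visitsT {t} h ↔ h.1 = t := by
        constructor
        · rintro (h1 | h2)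
          · exact h1
          · exact hprob_visits habs h.2 n h.1 hz (by simpa using h2)
        · intro h1; exact Or.inl h1
      simp only [this]
  rw [tsum_congr hcongr]
  rw [tsum_hist_eq_sum _ n (fun h hh => by
    by_cases hz : M.hprob σ n h = 0
    · rw [hz]; simp
    · exact absurd (hprobAux_len hz) hh)]
  rw [Finset.sum_product]
  rw [Finset.sum_congr rfl fun (s : S) _ => by
    rw [show ∑ l ∈ listFinset (A × S) n, (if (s, l).1 = t then M.hprob σ n (s, l) else 0)
      = if s = t then ∑ l ∈ listFinset (A × S) n, M.hprob σ n (s, l) else 0 from by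
        split_ifs with hs <;> simp [hs]]]
  rw [Finset.sum_ite_eq' Finset.univ t
    (fun s => ∑ l ∈ listFinset (A × S) n, M.hprob σ n (s, l))]
  simp [stateDist]
  rfl

end Reachability


section Reduction

variable {S A : Type} [Fintype S] [Fintype A] [DecidableEq S] [DecidableEq A]

lemma sum_dirac_mul {X : Type} [Fintype X] [DecidableEq X] (c : X) (F : X → ℝ) :
    ∑ x, dirac c x * F x = F c := by
  have h : ∀ x, dirac c x * F x = if x = c then F c else 0 := by
    intro x
    by_cases h : x = c <;> simp [dirac, h]
  rw [Finset.sum_congr rfl fun x _ => h x, Finset.sum_ite_eq' Finset.univ]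
  simp

lemma sum_dirac_mul' {X : Type} [Fintype X] [DecidableEq X] (c : X) (F : X → ℝ) (r : ℝ) :
    ∑ x, r * dirac c x * F x = r * F c := by
  have h : ∀ x, r * dirac c x * F x = r * (dirac c x * F x) := fun x => by ring
  rw [Finset.sum_congr rfl fun x _ => h x, ← Finset.mul_sum, sum_dirac_mul]

/-- Mass on the `false` (second) copies of the PFA states. -/
def embedNeg (p : S → ℝ) : PFA.RSt S → ℝ
  | Sum.inl (_, true) => 0
  | Sum.inl (s, false) => p s
  | Sum.inr _ => 0

lemma embedPos_dirac (c : S) : PFA.embedPos (dirac c) = dirac (Sum.inl (c, true) : PFA.RSt S) := by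
  funext t
  rcases t with ⟨x, _ | _⟩ | i <;> simp [PFA.embedPos, dirac]

/-- The mixture `ε·√ + (1-ε)·$` on actions. -/
def twoMix (A : Type) [Fintype A] [DecidableEq A] (ε : ℝ) : PFA.RAct A → ℝ := fun b =>
  ε * dirac (Sum.inr 2 : PFA.RAct A) b + (1 - ε) * dirac (Sum.inr 1 : PFA.RAct A) b

/-- The action prescribed at an in-round reading position. -/
def letterAct (w : List A) (r : ℕ) : PFA.RAct A → ℝ :=
  match w[r / 2]? with
  | some a => dirac (Sum.inl a)
  | none => dirac (Sum.inr 1)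

lemma letterAct_nonneg (w : List A) (r : ℕ) (b : PFA.RAct A) : 0 ≤ letterAct w r b := by
  unfold letterAct
  rcases w[r / 2]? with _ | a
  · exact dirac_nonneg _ _
  · exact dirac_nonneg _ _

lemma letterAct_sum (w : List A) (r : ℕ) : ∑ b, letterAct w r b = 1 := by
  unfold letterAct
  rcases w[r / 2]? with _ | a
  · exact dirac_sum _
  · exact dirac_sum _

lemma letterAct_of_some {w : List A} {r : ℕ} {a : A} (h : w[r / 2]? = some a) :
    letterAct w r = dirac (Sum.inl a : PFA.RAct A) := by
  unfold letterAct
  rw [h]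

/-- The time-dependent action-distribution of the strategy. -/
def actF (w : List A) (ε : ℝ) (n : ℕ) : PFA.RAct A → ℝ :=
  let r := n % (2 * w.length + 3)
  if r = 0 then twoMix A ε
  else if r = 2 * w.length + 1 ∨ r = 2 * w.length + 2 then dirac (Sum.inr 0)
  else if r % 2 = 1 then letterAct w r
  else dirac (Sum.inr 1)

lemma twoMix_nonneg {ε : ℝ} (hε0 : 0 ≤ ε) (hε1 : ε ≤ 1) (b : PFA.RAct A) :
    0 ≤ twoMix A ε b :=
  add_nonneg (mul_nonneg hε0 (dirac_nonneg _ _))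
    (mul_nonneg (by linarith) (dirac_nonneg _ _))

lemma twoMix_sum (ε : ℝ) : ∑ b, twoMix A ε b = 1 := by
  unfold twoMix
  rw [Finset.sum_add_distrib, ← Finset.mul_sum, ← Finset.mul_sum, dirac_sum, dirac_sum]
  ring

lemma actF_nonneg {ε : ℝ} (hε0 : 0 ≤ ε) (hε1 : ε ≤ 1) (w : List A) :
    ∀ n b, 0 ≤ actF w ε n b := by
  intro n b
  unfold actF
  split_ifs with h1 h2 h3
  all_goals first
    | exact twoMix_nonneg hε0 hε1 b
    | exact letterAct_nonneg _ _ _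
    | exact dirac_nonneg _ _

lemma actF_sum (ε : ℝ) (w : List A) : ∀ n, ∑ b, actF w ε n b = 1 := by
  intro n
  unfold actF
  split_ifs with h1 h2 h3
  all_goals first
    | exact twoMix_sum ε
    | exact letterAct_sum _ _
    | exact dirac_sum _

/-- The within-round distribution at position `r`. -/
def rho (P : PFA S A) (w : List A) (r : ℕ) : PFA.RSt S → ℝ :=
  if r = 2 * w.length + 2 then
    fun s => P.accProb w * dirac (PFA.stGood S) s + (1 - P.accProb w) * dirac (PFA.stBad S) s
  else if r % 2 = 0 then PFA.embedPos (P.wordDist (w.take (r / 2)))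
  else embedNeg (P.wordDist (w.take (r / 2)))

/-- Number of completed `√/$`-decisions before time `n`. -/
def mexp (w : List A) (n : ℕ) : ℕ := (n + 2 * w.length + 2) / (2 * w.length + 3)

/-- The claimed state distribution at time `n`. -/
def muF (P : PFA S A) (w : List A) (ε : ℝ) (n : ℕ) : PFA.RSt S → ℝ := fun s =>
  (1 - ε) ^ mexp w n * rho P w (n % (2 * w.length + 3)) s
    + (1 - (1 - ε) ^ mexp w n) * dirac (PFA.stTarget S) s

/-- One-step pushforward of a measure by an action. -/
def pushA (P : PFA S A) (b : PFA.RAct A) (μ : PFA.RSt S → ℝ) : PFA.RSt S → ℝ :=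
  fun s' => ∑ s, μ s * PFA.redδ P s b s'

/-- One-step pushforward by a distribution over actions. -/
def pushF (P : PFA S A) (g : PFA.RAct A → ℝ) (μ : PFA.RSt S → ℝ) : PFA.RSt S → ℝ :=
  fun s' => ∑ s, ∑ b, μ s * g b * PFA.redδ P s b s'

lemma sum_RSt (g : PFA.RSt S → ℝ) :
    ∑ s, g s = ((∑ x : S, g (Sum.inl (x, true))) + (∑ x : S, g (Sum.inl (x, false))))
      + (g (Sum.inr 0) + g (Sum.inr 1) + g (Sum.inr 2) + g (Sum.inr 3)) := by
  rw [Fintype.sum_sum_type, Fintype.sum_prod_type, Fin.sum_univ_four,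
    Finset.sum_congr rfl fun (x : S) _ => Fintype.sum_bool (fun b => g (Sum.inl (x, b))),
    Finset.sum_add_distrib]

lemma pushF_dirac (P : PFA S A) (b : PFA.RAct A) (μ : PFA.RSt S → ℝ) :
    pushF P (dirac b) μ = pushA P b μ := by
  funext s'
  unfold pushF pushA
  refine Finset.sum_congr rfl fun s _ => ?_
  have h : ∀ a, μ s * dirac b a * PFA.redδ P s a s'
      = dirac b a * (μ s * PFA.redδ P s a s') := fun a => by ring
  rw [Finset.sum_congr rfl fun a _ => h a, sum_dirac_mul]

lemma pushF_twoMix (P : PFA S A) (ε : ℝ) (μ : PFA.RSt S → ℝ) :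
    pushF P (twoMix A ε) μ
      = fun s' => ε * pushA P (Sum.inr 2) μ s' + (1 - ε) * pushA P (Sum.inr 1) μ s' := by
  funext s'
  unfold pushF pushA twoMix
  rw [Finset.mul_sum, Finset.mul_sum, ← Finset.sum_add_distrib]
  refine Finset.sum_congr rfl fun s _ => ?_
  have h : ∀ a, μ s * (ε * dirac (Sum.inr 2 : PFA.RAct A) a
        + (1 - ε) * dirac (Sum.inr 1 : PFA.RAct A) a) * PFA.redδ P s a s'
      = dirac (Sum.inr 2 : PFA.RAct A) a * (ε * (μ s * PFA.redδ P s a s'))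
        + dirac (Sum.inr 1 : PFA.RAct A) a * ((1 - ε) * (μ s * PFA.redδ P s a s')) :=
    fun a => by ring
  rw [Finset.sum_congr rfl fun a _ => h a, Finset.sum_add_distrib,
    sum_dirac_mul, sum_dirac_mul]
  try ring

lemma pushF_comb (P : PFA S A) (g : PFA.RAct A → ℝ) (μ1 μ2 : PFA.RSt S → ℝ) (c1 c2 : ℝ) :
    pushF P g (fun s => c1 * μ1 s + c2 * μ2 s)
      = fun s' => c1 * pushF P g μ1 s' + c2 * pushF P g μ2 s' := by
  funext s'
  unfold pushF
  rw [Finset.mul_sum, Finset.mul_sum, ← Finset.sum_add_distrib]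
  refine Finset.sum_congr rfl fun s _ => ?_
  rw [Finset.mul_sum, Finset.mul_sum, ← Finset.sum_add_distrib]
  refine Finset.sum_congr rfl fun b _ => ?_
  ring

lemma pushA_target (P : PFA S A) (b : PFA.RAct A) :
    pushA P b (dirac (PFA.stTarget S)) = dirac (PFA.stTarget S) := by
  funext s'
  unfold pushA
  rw [sum_dirac_mul (PFA.stTarget S) (fun s => PFA.redδ P s b s')]
  try rcases b with a | j <;> rfl

lemma pushA_dollar (P : PFA S A) (d : S → ℝ) :
    pushA P (Sum.inr 1) (PFA.embedPos d) = embedNeg d := by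
  funext s'
  unfold pushA
  rw [sum_RSt]
  simp only [PFA.embedPos, PFA.redδ, zero_mul, Finset.sum_const_zero, add_zero,
    reduceIte]
  rcases s' with ⟨y, _ | _⟩ | i
  · -- s' = inl (y, false)
    have h : ∀ x : S, d x * dirac (Sum.inl (x, false) : PFA.RSt S) (Sum.inl (y, false))
        = if x = y then d y else 0 := by
      intro x
      by_cases h : x = y
      · simp [dirac, h]
      · have hne : ¬ (Sum.inl (y, false) : PFA.RSt S) = Sum.inl (x, false) :=
          fun e => h ((Prod.ext_iff.1 (Sum.inl.inj e)).1.symm)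
        simp [dirac, hne, h]
    rw [Finset.sum_congr rfl fun x _ => h x, Finset.sum_ite_eq' Finset.univ]
    simp [embedNeg]
  · simp [dirac, embedNeg]
  · simp [dirac, embedNeg, PFA.stGood, PFA.stBad, PFA.stTarget, PFA.stLosing]

lemma pushA_letter (P : PFA S A) (d : S → ℝ) (a : A) :
    pushA P (Sum.inl a) (embedNeg d) = PFA.embedPos (P.stepD d a) := by
  funext s'
  unfold pushA
  rw [sum_RSt]
  simp only [embedNeg, PFA.redδ, zero_mul, Finset.sum_const_zero, add_zero, zero_add]
  rcases s' with ⟨y, _ | _⟩ | i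
  · simp [PFA.embedPos, dirac]
  · simp [PFA.embedPos, PFA.stepD]
  · simp [PFA.embedPos, PFA.stLosing, dirac]

lemma pushA_sharp (P : PFA S A) (d : S → ℝ) :
    pushA P (Sum.inr 0) (embedNeg d)
      = fun s' => (∑ x ∈ P.final, d x) * dirac (PFA.stGood S) s'
          + (∑ x ∈ P.finalᶜ, d x) * dirac (PFA.stBad S) s' := by
  funext s'
  unfold pushA
  rw [sum_RSt]
  simp only [embedNeg, PFA.redδ, zero_mul, Finset.sum_const_zero, add_zero, zero_add,
    reduceIte]
  have key : ∀ x : S,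
      d x * (if x ∈ P.final then dirac (PFA.stGood S) else dirac (PFA.stBad S)) s'
      = (if x ∈ P.final then d x * dirac (PFA.stGood S) s' else 0)
        + (if x ∈ P.finalᶜ then d x * dirac (PFA.stBad S) s' else 0) := by
    intro x
    by_cases hx : x ∈ P.final <;> simp [hx]
  rw [Finset.sum_congr rfl fun x _ => key x, Finset.sum_add_distrib,
    Finset.sum_ite_mem, Finset.sum_ite_mem]
  simp [Finset.sum_mul]

lemma pushA_return (P : PFA S A) (p q : ℝ) :
    pushA P (Sum.inr 0)
        (fun s => p * dirac (PFA.stGood S) s + q * dirac (PFA.stBad S) s)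
      = fun s' => (p + q) * dirac (Sum.inl (P.s0, true) : PFA.RSt S) s' := by
  funext s'
  unfold pushA
  have key : ∀ s : PFA.RSt S,
      (p * dirac (PFA.stGood S) s + q * dirac (PFA.stBad S) s) * PFA.redδ P s (Sum.inr 0) s'
      = p * dirac (PFA.stGood S) s * PFA.redδ P s (Sum.inr 0) s'
        + q * dirac (PFA.stBad S) s * PFA.redδ P s (Sum.inr 0) s' := fun s => by ring
  rw [Finset.sum_congr rfl fun s _ => key s, Finset.sum_add_distrib,
    sum_dirac_mul' (PFA.stGood S) (fun s => PFA.redδ P s (Sum.inr 0) s') p,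
    sum_dirac_mul' (PFA.stBad S) (fun s => PFA.redδ P s (Sum.inr 0) s') q]
  have h1 : PFA.redδ P (PFA.stGood S) (Sum.inr 0)
      = dirac (Sum.inl (P.s0, true) : PFA.RSt S) := by
    first | rfl | (norm_num [PFA.redδ, PFA.stGood])
  have h2 : PFA.redδ P (PFA.stBad S) (Sum.inr 0)
      = dirac (Sum.inl (P.s0, true) : PFA.RSt S) := by
    first | rfl | (norm_num [PFA.redδ, PFA.stBad])
  rw [h1, h2]
  ring

lemma pushA_check (P : PFA S A) :
    pushA P (Sum.inr 2) (PFA.embedPos (dirac P.s0)) = dirac (PFA.stTarget S) := by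
  funext s'
  unfold pushA
  rw [sum_RSt]
  simp only [PFA.embedPos, PFA.redδ, zero_mul, Finset.sum_const_zero, add_zero,
    Fin.reduceEq, reduceIte]
  have key : ∀ x : S,
      dirac P.s0 x * (if x = P.s0 then dirac (PFA.stTarget S)
        else dirac (PFA.stLosing S)) s'
      = if x = P.s0 then dirac (PFA.stTarget S) s' else 0 := by
    intro x
    by_cases h : x = P.s0 <;> simp [dirac, h]
  rw [Finset.sum_congr rfl fun x _ => key x, Finset.sum_ite_eq' Finset.univ]
  simp

end Reduction


section Reduction2

variable {S A : Type} [Fintype S] [Fintype A] [DecidableEq S] [DecidableEq A]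

lemma stepD_sum (P : PFA S A) (d : S → ℝ) (a : A) :
    ∑ s', P.stepD d a s' = ∑ s, d s := by
  unfold PFA.stepD
  rw [Finset.sum_comm]
  exact Finset.sum_congr rfl fun s _ => by rw [← Finset.mul_sum, P.δ_sum s a, mul_one]

lemma foldl_stepD_sum (P : PFA S A) :
    ∀ (l : List A) (d : S → ℝ), ∑ s, (l.foldl P.stepD d) s = ∑ s, d s := by
  intro l
  induction l with
  | nil => intro d; rfl
  | cons a t ih => intro d; rw [List.foldl_cons, ih, stepD_sum]

lemma wordDist_sum (P : PFA S A) (w : List A) : ∑ s, P.wordDist w s = 1 := by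
  unfold PFA.wordDist
  rw [foldl_stepD_sum, dirac_sum]

lemma foldl_stepD_nonneg (P : PFA S A) :
    ∀ (l : List A) (d : S → ℝ), (∀ s, 0 ≤ d s) → ∀ s, 0 ≤ (l.foldl P.stepD d) s := by
  intro l
  induction l with
  | nil => intro d hd; exact hd
  | cons a t ih =>
    intro d hd
    refine ih _ fun s => ?_
    exact Finset.sum_nonneg fun x _ => mul_nonneg (hd x) (P.δ_nonneg x a s)

lemma wordDist_nonneg (P : PFA S A) (w : List A) (s : S) : 0 ≤ P.wordDist w s :=
  foldl_stepD_nonneg P w (dirac P.s0) (dirac_nonneg P.s0) s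

lemma accProb_nonneg (P : PFA S A) (w : List A) : 0 ≤ P.accProb w :=
  Finset.sum_nonneg fun s _ => wordDist_nonneg P w s

lemma accProb_le_one (P : PFA S A) (w : List A) : P.accProb w ≤ 1 := by
  rw [← wordDist_sum P w]
  exact Finset.sum_le_sum_of_subset_of_nonneg (Finset.subset_univ _)
    (fun s _ _ => wordDist_nonneg P w s)

lemma wordDist_nil (P : PFA S A) : P.wordDist [] = dirac P.s0 := rfl

lemma wordDist_take_succ (P : PFA S A) {w : List A} {i : ℕ} {a : A} (h : w[i]? = some a) :
    P.wordDist (w.take (i+1)) = P.stepD (P.wordDist (w.take i)) a := by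
  unfold PFA.wordDist
  rw [List.take_succ, h]
  show List.foldl _ _ (List.take i w ++ [a]) = _
  rw [List.foldl_append]
  rfl

/-! Arithmetic helpers. -/

lemma mexp_add_one (w : List A) (n : ℕ) : mexp w (n+1) = n / (2*w.length+3) + 1 := by
  unfold mexp
  have e : n + 1 + 2*w.length + 2 = n + (2*w.length+3) := by omega
  rw [e, Nat.add_div_right _ (by omega)]

lemma mexp_mod_zero {w : List A} {n : ℕ} (h : n % (2*w.length+3) = 0) :
    mexp w n = n / (2*w.length+3) := by
  have hd := Nat.div_add_mod n (2*w.length+3)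
  unfold mexp
  have e : n + 2*w.length + 2 = (2*w.length+2) + (2*w.length+3) * (n / (2*w.length+3)) := by
    omega
  rw [e, Nat.add_mul_div_left _ _ (by omega : 0 < 2*w.length+3),
    Nat.div_eq_of_lt (by omega), zero_add]

lemma mexp_mod_ne_zero {w : List A} {n : ℕ} (h : n % (2*w.length+3) ≠ 0) :
    mexp w n = n / (2*w.length+3) + 1 := by
  have hd := Nat.div_add_mod n (2*w.length+3)
  have hlt : n % (2*w.length+3) < 2*w.length+3 := Nat.mod_lt _ (by omega)
  unfold mexp
  have e : n + 2*w.length + 2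
      = ((n % (2*w.length+3) - 1) + (2*w.length+3))
        + (2*w.length+3) * (n / (2*w.length+3)) := by omega
  rw [e, Nat.add_mul_div_left _ _ (by omega : 0 < 2*w.length+3),
    Nat.add_div_right _ (by omega : 0 < 2*w.length+3), Nat.div_eq_of_lt (by omega)]
  omega

lemma mod_succ_eq (n L : ℕ) (hL : 0 < L) :
    (n+1) % L = if n % L = L - 1 then 0 else n % L + 1 := by
  have hd := Nat.div_add_mod n L
  have hlt : n % L < L := Nat.mod_lt _ hL
  split_ifs with h
  · have e : n + 1 = L * (n / L) + L := by omega
    rw [e, Nat.mul_add_mod, Nat.mod_self]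
  · have e : n + 1 = (n % L + 1) + L * (n / L) := by omega
    rw [e, Nat.add_mul_mod_self_left, Nat.mod_eq_of_lt (by omega)]

lemma mul_add_div_eq {L q j : ℕ} (hL : 0 < L) (hj : j < L) : (L*q + j)/L = q := by
  rw [Nat.mul_add_div hL, Nat.div_eq_of_lt hj, add_zero]

lemma mul_add_mod_eq {L q j : ℕ} (hj : j < L) : (L*q + j) % L = j := by
  rw [Nat.mul_add_mod]
  exact Nat.mod_eq_of_lt hj

/-! Branch lemmas for `actF` and `rho`. -/

variable {w : List A} {ε : ℝ} {n : ℕ}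

lemma actF_eq_mix (h : n % (2*w.length+3) = 0) : actF w ε n = twoMix A ε := by
  unfold actF
  rw [if_pos h]

lemma actF_eq_sharp (h : n % (2*w.length+3) = 2*w.length+1 ∨ n % (2*w.length+3) = 2*w.length+2) :
    actF w ε n = dirac (Sum.inr 0 : PFA.RAct A) := by
  unfold actF
  rw [if_neg (by omega), if_pos h]

lemma actF_eq_letter (h0 : n % (2*w.length+3) ≠ 0)
    (h1 : n % (2*w.length+3) ≠ 2*w.length+1) (h2 : n % (2*w.length+3) ≠ 2*w.length+2)
    (h3 : n % (2*w.length+3) % 2 = 1) :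
    actF w ε n = letterAct w (n % (2*w.length+3)) := by
  unfold actF
  rw [if_neg h0, if_neg (by tauto), if_pos h3]

lemma actF_eq_dollar (h0 : n % (2*w.length+3) ≠ 0)
    (h1 : n % (2*w.length+3) ≠ 2*w.length+1) (h2 : n % (2*w.length+3) ≠ 2*w.length+2)
    (h3 : n % (2*w.length+3) % 2 = 0) :
    actF w ε n = dirac (Sum.inr 1 : PFA.RAct A) := by
  unfold actF
  rw [if_neg h0, if_neg (by tauto), if_neg (by omega)]

variable {P : PFA S A}

lemma rho_last : rho P w (2*w.length+2) = fun s =>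
    P.accProb w * dirac (PFA.stGood S) s + (1 - P.accProb w) * dirac (PFA.stBad S) s := by
  unfold rho
  rw [if_pos rfl]

lemma rho_even {r : ℕ} (h2 : r % 2 = 0) (h : r ≠ 2*w.length+2) :
    rho P w r = PFA.embedPos (P.wordDist (w.take (r / 2))) := by
  unfold rho
  rw [if_neg h, if_pos h2]

lemma rho_odd {r : ℕ} (h2 : r % 2 = 1) :
    rho P w r = embedNeg (P.wordDist (w.take (r / 2))) := by
  unfold rho
  rw [if_neg (by omega), if_neg (by omega)]

/-- The strategy used in the reduction. -/
def redStrat (P : PFA S A) (w : List A) (ε : ℝ) (hε0 : 0 ≤ ε) (hε1 : ε ≤ 1) :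
    Strategy (PFA.RSt S) (PFA.RAct A) Unit (PFA.redPOMDP P).obs :=
  timeStrat (PFA.redPOMDP P) (actF w ε) (actF_nonneg hε0 hε1 w) (actF_sum ε w)

lemma stateDist_eq_muF (P : PFA S A) (w : List A) {ε : ℝ} (hε0 : 0 ≤ ε) (hε1 : ε ≤ 1) :
    ∀ n, stateDist (PFA.redPOMDP P) (redStrat P w ε hε0 hε1) n = muF P w ε n := by
  intro n
  induction n with
  | zero =>
    funext s
    rw [stateDist_zero]
    show dirac (Sum.inl (P.s0, true)) s = _
    unfold muF
    have hm : mexp w 0 = 0 := by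
      unfold mexp
      exact Nat.div_eq_of_lt (by omega)
    have hr : (0 : ℕ) % (2*w.length+3) = 0 := Nat.zero_mod _
    rw [hm, hr, rho_even (by omega) (by omega)]
    simp only [Nat.zero_div, List.take_zero, wordDist_nil, embedPos_dirac, pow_zero]
    ring
  | succ n ih =>
    funext s'
    unfold redStrat at ih ⊢
    rw [stateDist_succ]
    have hstep : ∑ s, ∑ a, stateDist (PFA.redPOMDP P)
          (timeStrat (PFA.redPOMDP P) (actF w ε) (actF_nonneg hε0 hε1 w) (actF_sum ε w)) n s
        * actF w ε n a * (PFA.redPOMDP P).δ s a s'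
      = pushF P (actF w ε n) (muF P w ε n) s' := by
      rw [ih]; rfl
    rw [hstep]
    clear hstep ih
    have hcomb : muF P w ε n = fun s => (1-ε)^(mexp w n) * rho P w (n % (2*w.length+3)) s
        + (1 - (1-ε)^(mexp w n)) * dirac (PFA.stTarget S) s := rfl
    rw [hcomb, pushF_comb]
    have hm1 : mexp w (n+1) = n / (2*w.length+3) + 1 := mexp_add_one w n
    have hlt : n % (2*w.length+3) < 2*w.length+3 := Nat.mod_lt _ (by omega)
    have hmod1 := mod_succ_eq n (2*w.length+3) (by omega)
    by_cases hr0 : n % (2*w.length+3) = 0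
    · -- round boundary: mix of √ and $
      have hm0 : mexp w n = n / (2*w.length+3) := mexp_mod_zero hr0
      have hmod1' : (n+1) % (2*w.length+3) = 1 := by
        rw [hmod1, hr0, if_neg (by omega)]
      rw [actF_eq_mix hr0, hr0,
        rho_even (by omega) (by omega)]
      simp only [Nat.zero_div, List.take_zero, wordDist_nil]
      unfold muF
      rw [hm1, hmod1', hm0, rho_odd (by omega)]
      simp only [pushF_twoMix, pushA_check, pushA_dollar, pushA_target]
      norm_num [List.take_zero, wordDist_nil]
      ring
    · have hm0 : mexp w n = n / (2*w.length+3) + 1 := mexp_mod_ne_zero hr0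
      by_cases hrlast : n % (2*w.length+3) = 2*w.length+2
      · -- ## step back to the start
        have hmod1' : (n+1) % (2*w.length+3) = 0 := by
          rw [hmod1, if_pos (by omega)]
        rw [actF_eq_sharp (Or.inr hrlast), hrlast, rho_last]
        unfold muF
        rw [hm1, hmod1', hm0, rho_even (by omega) (by omega)]
        simp only [Nat.zero_div, List.take_zero, wordDist_nil, embedPos_dirac,
          pushF_dirac, pushA_return, pushA_target]
        ring
      · have hmod1' : (n+1) % (2*w.length+3) = n % (2*w.length+3) + 1 := by
          rw [hmod1, if_neg (by omega)]
        by_cases hrpen : n % (2*w.length+3) = 2*w.length+1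
        · -- # step to good/bad
          rw [actF_eq_sharp (Or.inl hrpen), hrpen, rho_odd (by omega)]
          have hdivk : (2*w.length+1)/2 = w.length := by omega
          rw [hdivk, List.take_length]
          unfold muF
          rw [hm1, hmod1', hrpen, hm0]
          have : 2*w.length+1+1 = 2*w.length+2 := by omega
          rw [this, rho_last]
          simp only [pushF_dirac, pushA_sharp, pushA_target]
          have hcompl : ∑ x ∈ P.finalᶜ, P.wordDist w x = 1 - P.accProb w := by
            have := Finset.sum_add_sum_compl P.final (P.wordDist w)
            rw [wordDist_sum] at this
            unfold PFA.accProb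
            linarith
          rw [hcompl]
          show _ = _ * (P.accProb w * _ + (1 - P.accProb w) * _) + _
          unfold PFA.accProb
          ring
        · by_cases hrodd : n % (2*w.length+3) % 2 = 1
          · -- letter step
            have hik : n % (2*w.length+3) / 2 < w.length := by omega
            have hget : w[n % (2*w.length+3) / 2]? = some (w[n % (2*w.length+3) / 2]) :=
              List.getElem?_eq_getElem hik
            rw [actF_eq_letter hr0 hrpen hrlast hrodd, letterAct_of_some hget,
              rho_odd hrodd]
            unfold muF
            rw [hm1, hmod1', hm0, rho_even (by omega) (by omega)]
            have hdiv : (n % (2*w.length+3) + 1)/2 = n % (2*w.length+3)/2 + 1 := by omega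
            rw [hdiv, wordDist_take_succ P hget]
            simp only [pushF_dirac, pushA_letter, pushA_target]
            try ring
          · -- $ step
            rw [actF_eq_dollar hr0 hrpen hrlast (by omega),
              rho_even (by omega) hrlast]
            unfold muF
            rw [hm1, hmod1', hm0, rho_odd (by omega)]
            have hdiv : (n % (2*w.length+3) + 1)/2 = n % (2*w.length+3)/2 := by omega
            rw [hdiv]
            simp only [pushF_dirac, pushA_dollar, pushA_target]
            try ring

end Reduction2


section Reduction3

variable {S A : Type} [Fintype S] [Fintype A] [DecidableEq S] [DecidableEq A]

/-- State-dependent version of the cost. -/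
def cst : PFA.RSt S → ℝ
  | Sum.inl (_, true) => 1
  | Sum.inl (_, false) => -1
  | Sum.inr i => if i = 0 then -1 else if i = 1 then 1 else if i = 3 then 1 else 0

lemma costRed_eq_cst (s : PFA.RSt S) (a : PFA.RAct A) : PFA.costRed s a = cst s := by
  rcases s with ⟨x, _ | _⟩ | i <;> rfl

lemma cst_target : cst (PFA.stTarget S) = 0 := by
  show (if (2 : Fin 4) = 0 then (-1:ℝ) else if (2:Fin 4) = 1 then 1
    else if (2:Fin 4) = 3 then 1 else 0) = 0
  rw [if_neg (by decide), if_neg (by decide), if_neg (by decide)]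

lemma sum_embedPos_cst (d : S → ℝ) : ∑ s, PFA.embedPos d s * cst s = ∑ x, d x := by
  rw [sum_RSt]
  simp [PFA.embedPos, cst]

lemma sum_embedNeg_cst (d : S → ℝ) : ∑ s, embedNeg d s * cst s = - ∑ x, d x := by
  rw [sum_RSt]
  simp [embedNeg, cst, Finset.sum_neg_distrib]

lemma sum_goodbad_cst (p q : ℝ) :
    ∑ s, (p * dirac (PFA.stGood S) s + q * dirac (PFA.stBad S) s) * cst s = -p + q := by
  have h : ∀ s : PFA.RSt S, (p * dirac (PFA.stGood S) s + q * dirac (PFA.stBad S) s) * cst s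
      = p * (dirac (PFA.stGood S) s * cst s) + q * (dirac (PFA.stBad S) s * cst s) :=
    fun s => by ring
  rw [Finset.sum_congr rfl fun s _ => h s, Finset.sum_add_distrib,
    ← Finset.mul_sum, ← Finset.mul_sum, sum_dirac_mul, sum_dirac_mul]
  have hg : cst (PFA.stGood S) = -1 := by
    show (if (0 : Fin 4) = 0 then (-1:ℝ) else if (0:Fin 4) = 1 then 1
      else if (0:Fin 4) = 3 then 1 else 0) = -1
    rw [if_pos (by decide)]
  have hb : cst (PFA.stBad S) = 1 := by
    show (if (1 : Fin 4) = 0 then (-1:ℝ) else if (1:Fin 4) = 1 then 1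
      else if (1:Fin 4) = 3 then 1 else 0) = 1
    rw [if_neg (by decide), if_pos (by decide)]
  rw [hg, hb]
  ring

/-- Expected one-step cost coefficient at round position `r`. -/
def rhoC (P : PFA S A) (w : List A) (r : ℕ) : ℝ :=
  if r = 2*w.length+2 then 1 - 2 * P.accProb w else if r % 2 = 0 then 1 else -1

lemma sum_rho_cst (P : PFA S A) (w : List A) (r : ℕ) :
    ∑ s, rho P w r s * cst s = rhoC P w r := by
  unfold rho rhoC
  split_ifs with h1 h2
  · rw [sum_goodbad_cst]
    try ring
  · rw [sum_embedPos_cst, wordDist_sum]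
  · rw [sum_embedNeg_cst, wordDist_sum]
    try norm_num

lemma sum_muF_cst (P : PFA S A) (w : List A) (ε : ℝ) (n : ℕ) :
    ∑ s, muF P w ε n s * cst s
      = (1-ε)^(mexp w n) * rhoC P w (n % (2*w.length+3)) := by
  have h : ∀ s : PFA.RSt S, muF P w ε n s * cst s
      = (1-ε)^(mexp w n) * (rho P w (n % (2*w.length+3)) s * cst s)
        + (1 - (1-ε)^(mexp w n)) * (dirac (PFA.stTarget S) s * cst s) := by
    intro s
    unfold muF
    ring
  rw [Finset.sum_congr rfl fun s _ => h s, Finset.sum_add_distrib,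
    ← Finset.mul_sum, ← Finset.mul_sum, sum_rho_cst, sum_dirac_mul, cst_target]
  ring

lemma expTotal_formula (P : PFA S A) (w : List A) {ε : ℝ} (hε0 : 0 ≤ ε) (hε1 : ε ≤ 1)
    (n : ℕ) :
    (PFA.redPOMDP P).expTotalSteps PFA.costRed (redStrat P w ε hε0 hε1) n
      = ∑ j ∈ Finset.range n, (1-ε)^(mexp w j) * rhoC P w (j % (2*w.length+3)) := by
  induction n with
  | zero =>
    rw [Finset.sum_range_zero]
    exact expTotalSteps_zero _
  | succ n ih =>
    unfold redStrat at ih ⊢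
    rw [expTotalSteps_succ (actF w ε) (actF_nonneg hε0 hε1 w) (actF_sum ε w)
        PFA.costRed cst costRed_eq_cst n, ih, Finset.sum_range_succ]
    congr 1
    have := stateDist_eq_muF P w hε0 hε1 n
    unfold redStrat at this
    rw [this, sum_muF_cst]

/-! Reachability. -/

lemma target_abs (P : PFA S A) : ∀ (a : PFA.RAct A) (s' : PFA.RSt S),
    (PFA.redPOMDP P).δ (PFA.stTarget S) a s' ≠ 0 → s' = PFA.stTarget S := by
  intro a s' h
  have hδ : (PFA.redPOMDP P).δ (PFA.stTarget S) a = dirac (PFA.stTarget S) := by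
    rcases a with a | j <;> first | rfl | (norm_num [PFA.redδ, PFA.stTarget])
  rw [hδ] at h
  by_contra hne
  exact h (by simp [dirac, hne])

lemma rho_target (P : PFA S A) (w : List A) (r : ℕ) :
    rho P w r (PFA.stTarget S) = 0 := by
  unfold rho
  split_ifs with h1 h2
  · have hg : dirac (PFA.stGood S) (PFA.stTarget S) = 0 := by
      simp [dirac, PFA.stGood, PFA.stTarget]
    have hb : dirac (PFA.stBad S) (PFA.stTarget S) = 0 := by
      simp [dirac, PFA.stBad, PFA.stTarget]
    show P.accProb w * dirac (PFA.stGood S) (PFA.stTarget S)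
      + (1 - P.accProb w) * dirac (PFA.stBad S) (PFA.stTarget S) = 0
    rw [hg, hb]
    ring
  · rfl
  · rfl

lemma probReachBy_formula (P : PFA S A) (w : List A) {ε : ℝ} (hε0 : 0 ≤ ε) (hε1 : ε ≤ 1)
    (n : ℕ) :
    (PFA.redPOMDP P).probReachBy (PFA.TRed S) (redStrat P w ε hε0 hε1) n
      = 1 - (1-ε)^(mexp w n) := by
  have h1 : (PFA.TRed S) = ({PFA.stTarget S} : Set (PFA.RSt S)) := rfl
  rw [h1, probReachBy_eq_stateDist (target_abs P) n, stateDist_eq_muF P w hε0 hε1 n]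
  unfold muF
  rw [rho_target]
  simp [dirac]

lemma mexp_tendsto (w : List A) : Filter.Tendsto (mexp w) Filter.atTop Filter.atTop := by
  apply Filter.tendsto_atTop_atTop_of_monotone
  · intro a b hab
    unfold mexp
    exact Nat.div_le_div_right (by omega)
  · intro b
    refine ⟨(2*w.length+3) * b, ?_⟩
    unfold mexp
    have e : (2*w.length+3) * b + 2*w.length + 2 = (2*w.length+2) + (2*w.length+3)*b := by
      ring
    rw [e, Nat.add_mul_div_left _ _ (by omega : 0 < 2*w.length+3),
      Nat.div_eq_of_lt (by omega)]
    omega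

/-! The alternating sums within a round. -/

lemma altSum (m : ℕ) :
    ∑ r ∈ Finset.range (2*m+1), (if (r+1) % 2 = 0 then (1:ℝ) else -1) = -1 := by
  induction m with
  | zero => norm_num
  | succ m ih =>
    have e : 2*(m+1)+1 = (2*m+1) + 1 + 1 := by ring
    rw [e, Finset.sum_range_succ, Finset.sum_range_succ, ih,
      if_pos (by omega : (2*m+1+1) % 2 = 0), if_neg (by omega : ¬ (2*m+1+1+1) % 2 = 0)]
    ring

lemma rhoC_zero (P : PFA S A) (w : List A) : rhoC P w 0 = 1 := by
  unfold rhoC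
  rw [if_neg (by omega), if_pos (by omega)]

lemma round_sum (P : PFA S A) (w : List A) (ε : ℝ) (q : ℕ) :
    ∑ r ∈ Finset.range (2*w.length+3),
        (1-ε)^(mexp w ((2*w.length+3)*q + r)) * rhoC P w (((2*w.length+3)*q + r) % (2*w.length+3))
      = (1 - 2 * P.accProb w * (1-ε)) * (1-ε)^q := by
  have hL : 0 < 2*w.length+3 := by omega
  rw [show 2*w.length+3 = (2*w.length+2) + 1 from by omega, Finset.sum_range_succ']
  rw [show (2*w.length+2) + 1 = 2*w.length+3 from by omega]
  -- the r = 0 term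
  have h0 : (2*w.length+3)*q + 0 = (2*w.length+3)*q + 0 := rfl
  have hmod0 : ((2*w.length+3)*q + 0) % (2*w.length+3) = 0 := mul_add_mod_eq (by omega)
  have hdiv0 : ((2*w.length+3)*q + 0) / (2*w.length+3) = q := mul_add_div_eq hL (by omega)
  have hm0 : mexp w ((2*w.length+3)*q + 0) = q := by
    rw [mexp_mod_zero hmod0, hdiv0]
  rw [hm0, hmod0, rhoC_zero]
  -- the other terms
  have hterm : ∀ r ∈ Finset.range (2*w.length+2),
      (1-ε)^(mexp w ((2*w.length+3)*q + (r+1)))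
          * rhoC P w (((2*w.length+3)*q + (r+1)) % (2*w.length+3))
        = (1-ε)^(q+1) * rhoC P w (r+1) := by
    intro r hr
    rw [Finset.mem_range] at hr
    have hmod : ((2*w.length+3)*q + (r+1)) % (2*w.length+3) = r+1 :=
      mul_add_mod_eq (by omega)
    have hdiv : ((2*w.length+3)*q + (r+1)) / (2*w.length+3) = q :=
      mul_add_div_eq hL (by omega)
    rw [hmod, mexp_mod_ne_zero (by rw [hmod]; omega), hdiv]
  rw [Finset.sum_congr rfl hterm, ← Finset.mul_sum]
  have hsum : ∑ r ∈ Finset.range (2*w.length+2), rhoC P w (r+1) = -2 * P.accProb w := by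
    rw [Finset.sum_range_succ]
    have h1 : ∀ r ∈ Finset.range (2*w.length+1),
        rhoC P w (r+1) = (if (r+1) % 2 = 0 then (1:ℝ) else -1) := by
      intro r hr
      rw [Finset.mem_range] at hr
      unfold rhoC
      rw [if_neg (by omega)]
    have h2 : rhoC P w (2*w.length+1+1) = 1 - 2 * P.accProb w := by
      unfold rhoC
      rw [if_pos (by omega)]
    rw [Finset.sum_congr rfl h1, altSum, h2]
    ring
  rw [hsum, pow_succ]
  ring

lemma E_round (P : PFA S A) (w : List A) (ε : ℝ) (Q : ℕ) :
    ∑ j ∈ Finset.range ((2*w.length+3)*Q),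
        (1-ε)^(mexp w j) * rhoC P w (j % (2*w.length+3))
      = (1 - 2 * P.accProb w * (1-ε)) * ∑ i ∈ Finset.range Q, (1-ε)^i := by
  induction Q with
  | zero => simp
  | succ Q ih =>
    rw [Nat.mul_succ, Finset.sum_range_add, ih, round_sum, Finset.sum_range_succ]
    ring

lemma rhoC_abs (P : PFA S A) (w : List A) (r : ℕ) : |rhoC P w r| ≤ 1 := by
  have h0 := accProb_nonneg P w
  have h1 := accProb_le_one P w
  unfold rhoC
  split_ifs
  · rw [abs_le]
    constructor <;> linarith
  · norm_num
  · norm_num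

lemma mexp_ge (w : List A) (n : ℕ) : n / (2*w.length+3) ≤ mexp w n := by
  unfold mexp
  exact Nat.div_le_div_right (by omega)

lemma E_bound (P : PFA S A) (w : List A) {ε : ℝ} (hε0 : 0 ≤ ε) (hε1 : ε ≤ 1) (n : ℕ) :
    ∑ j ∈ Finset.range n, (1-ε)^(mexp w j) * rhoC P w (j % (2*w.length+3))
      ≤ (1 - 2 * P.accProb w * (1-ε))
          * (∑ i ∈ Finset.range (n / (2*w.length+3)), (1-ε)^i)
        + (2*w.length+3) := by
  have hL : 0 < 2*w.length+3 := by omega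
  have hbase0 : (0:ℝ) ≤ 1 - ε := by linarith
  have hbase1 : 1 - ε ≤ 1 := by linarith
  have hd := Nat.div_add_mod n (2*w.length+3)
  have hrlt : n % (2*w.length+3) < 2*w.length+3 := Nat.mod_lt _ hL
  rw [show n = (2*w.length+3) * (n / (2*w.length+3)) + n % (2*w.length+3) from hd.symm,
    Finset.sum_range_add, E_round]
  rw [show ((2*w.length+3) * (n / (2*w.length+3)) + n % (2*w.length+3)) / (2*w.length+3)
      = n / (2*w.length+3) from mul_add_div_eq hL hrlt]
  have hterm : ∀ j ∈ Finset.range (n % (2*w.length+3)),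
      (1-ε)^(mexp w ((2*w.length+3) * (n / (2*w.length+3)) + j))
          * rhoC P w (((2*w.length+3) * (n / (2*w.length+3)) + j) % (2*w.length+3))
        ≤ (1-ε)^(n / (2*w.length+3)) := by
    intro j hj
    rw [Finset.mem_range] at hj
    have hdiv : ((2*w.length+3) * (n / (2*w.length+3)) + j) / (2*w.length+3)
        = n / (2*w.length+3) := mul_add_div_eq hL (by omega)
    calc (1-ε)^(mexp w ((2*w.length+3) * (n / (2*w.length+3)) + j))
          * rhoC P w (((2*w.length+3) * (n / (2*w.length+3)) + j) % (2*w.length+3))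
        ≤ |(1-ε)^(mexp w ((2*w.length+3) * (n / (2*w.length+3)) + j))
          * rhoC P w (((2*w.length+3) * (n / (2*w.length+3)) + j) % (2*w.length+3))| :=
          le_abs_self _
      _ = (1-ε)^(mexp w ((2*w.length+3) * (n / (2*w.length+3)) + j))
          * |rhoC P w (((2*w.length+3) * (n / (2*w.length+3)) + j) % (2*w.length+3))| := by
          rw [abs_mul, abs_of_nonneg (pow_nonneg hbase0 _)]
      _ ≤ (1-ε)^(mexp w ((2*w.length+3) * (n / (2*w.length+3)) + j)) * 1 :=
          mul_le_mul_of_nonneg_left (rhoC_abs P w _) (pow_nonneg hbase0 _)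
      _ = (1-ε)^(mexp w ((2*w.length+3) * (n / (2*w.length+3)) + j)) := mul_one _
      _ ≤ (1-ε)^(n / (2*w.length+3)) := by
          refine pow_le_pow_of_le_one hbase0 hbase1 ?_
          calc n / (2*w.length+3)
              = ((2*w.length+3) * (n / (2*w.length+3)) + j) / (2*w.length+3) := hdiv.symm
            _ ≤ mexp w _ := mexp_ge w _
  have hsum2 : ∑ j ∈ Finset.range (n % (2*w.length+3)),
      (1-ε)^(mexp w ((2*w.length+3) * (n / (2*w.length+3)) + j))
        * rhoC P w (((2*w.length+3) * (n / (2*w.length+3)) + j) % (2*w.length+3))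
      ≤ (2*w.length+3) := by
    calc _ ≤ ∑ _j ∈ Finset.range (n % (2*w.length+3)), (1-ε)^(n / (2*w.length+3)) :=
          Finset.sum_le_sum hterm
      _ = ((n % (2*w.length+3) : ℕ) : ℝ) * (1-ε)^(n / (2*w.length+3)) := by
          rw [Finset.sum_const, nsmul_eq_mul, Finset.card_range]
      _ ≤ (2*(w.length:ℝ)+3) * 1 := by
          have hcast : ((n % (2*w.length+3) : ℕ) : ℝ) ≤ 2*(w.length:ℝ)+3 := by
            exact_mod_cast hrlt.le
          refine mul_le_mul hcast ?_ (pow_nonneg hbase0 _) (by positivity)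
          exact pow_le_one₀ hbase0 hbase1
      _ = (2*(w.length:ℝ)+3) := mul_one _
  linarith

end Reduction3


/-- If some word is accepted by the PFA `P` with probability
strictly greater than `1/2`, then the optimal cost of the reduction POMDP
is `-∞`: for every `τ < 0` there is an almost-sure winning strategy of
value below `τ`. -/
theorem optCost_eq_bot_of_accProb_gt_half
    {S A : Type} [Fintype S] [Fintype A] [DecidableEq S] [DecidableEq A]
    (P : PFA S A) (hw : ∃ w : List A, 1 / 2 < P.accProb w) :
    (PFA.redPOMDP P).optCost (PFA.TRed S) PFA.costRed = ⊥ ∧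
    ∀ τ : ℝ, τ < 0 →
      ∃ σ : Strategy (PFA.RSt S) (PFA.RAct A) Unit (PFA.redPOMDP P).obs,
        (PFA.redPOMDP P).AlmostSure (PFA.TRed S) σ ∧
        (PFA.redPOMDP P).Val PFA.costRed σ < (τ : EReal) := by
  obtain ⟨w, hpgt⟩ := hw
  have main : ∀ τ : ℝ, τ < 0 →
      ∃ σ : Strategy (PFA.RSt S) (PFA.RAct A) Unit (PFA.redPOMDP P).obs,
        (PFA.redPOMDP P).AlmostSure (PFA.TRed S) σ ∧
        (PFA.redPOMDP P).Val PFA.costRed σ < (τ : EReal) := by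
    intro τ hτ
    set p := P.accProb w with hp
    have hp1 : p ≤ 1 := accProb_le_one P w
    set Lr : ℝ := 2*(w.length:ℝ)+3 with hLr
    have hLr0 : 0 < Lr := by positivity
    set D : ℝ := 2*p + Lr + 3 - τ with hD
    have hD0 : 0 < D := by
      rw [hD]
      linarith
    set ε : ℝ := (2*p - 1)/D with hε
    have hε0 : 0 < ε := div_pos (by linarith) hD0
    have hε1 : ε < 1 := by
      rw [hε, div_lt_one hD0]
      linarith
    have hb0 : (0:ℝ) ≤ 1 - ε := by linarith
    have hb1 : 1 - ε < 1 := by linarith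
    refine ⟨redStrat P w ε hε0.le hε1.le, ?_, ?_⟩
    · -- almost-sure winning
      unfold POMDP.AlmostSure POMDP.probReach
      have hform := probReachBy_formula P w hε0.le hε1.le
      simp only [hform]
      have hle : ∀ n, 1 - (1-ε)^(mexp w n) ≤ 1 := fun n => by
        have := pow_nonneg hb0 (mexp w n)
        linarith
      have htend : Filter.Tendsto (fun n => 1 - (1-ε)^(mexp w n)) Filter.atTop (nhds 1) := by
        have h1 : Filter.Tendsto (fun m : ℕ => (1-ε)^m) Filter.atTop (nhds 0) :=
          tendsto_pow_atTop_nhds_zero_of_lt_one hb0 hb1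
        have h2 := (h1.comp (mexp_tendsto w)).const_sub 1
        simpa using h2
      apply le_antisymm
      · exact ciSup_le hle
      · have hbdd : BddAbove (Set.range fun n => 1 - (1-ε)^(mexp w n)) := by
          refine ⟨1, ?_⟩
          rintro x ⟨n, rfl⟩
          exact hle n
        exact le_of_tendsto htend (Filter.Eventually.of_forall fun n => le_ciSup hbdd n)
    · -- value below τ
      unfold POMDP.Val
      set β : ℝ := 1 - 2*p*(1-ε) with hβ
      have hβε : β = ε * (τ - Lr - 3) := by
        have hεD : ε * (2*p + Lr + 3 - τ) = 2*p - 1 := by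
          rw [← hD, hε]; exact div_mul_cancel₀ _ hD0.ne'
        rw [hβ]
        linear_combination hεD
      have hβ0 : β ≤ 0 := by
        rw [hβε]
        have h1 : τ - Lr - 3 ≤ 0 := by linarith
        exact mul_nonpos_of_nonneg_of_nonpos hε0.le h1
      have hgeo : HasSum (fun i : ℕ => (1-ε)^i) (1 - (1-ε))⁻¹ :=
        hasSum_geometric_of_lt_one hb0 hb1
      have hgt : Filter.Tendsto (fun Q => β * ∑ i ∈ Finset.range Q, (1-ε)^i)
          Filter.atTop (nhds (β * (1 - (1-ε))⁻¹)) :=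
        hgeo.tendsto_sum_nat.const_mul β
      have hβinv : β * (1 - (1-ε))⁻¹ = τ - Lr - 3 := by
        rw [hβε, show (1:ℝ) - (1-ε) = ε from by ring]
        field_simp
      have hev : ∀ᶠ Q in Filter.atTop, β * ∑ i ∈ Finset.range Q, (1-ε)^i < τ - Lr - 2 := by
        refine hgt.eventually (gt_mem_nhds ?_)
        rw [hβinv]
        linarith
      obtain ⟨Q, hQ⟩ := hev.exists
      have hEbd : ∀ᶠ n in Filter.atTop,
          (PFA.redPOMDP P).expTotalSteps PFA.costRed (redStrat P w ε hε0.le hε1.le) n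
            ≤ τ - 1 := by
        filter_upwards [Filter.eventually_ge_atTop ((2*w.length+3) * Q)] with n hn
        have hQle : Q ≤ n / (2*w.length+3) := by
          refine (Nat.le_div_iff_mul_le (by omega)).2 ?_
          rw [Nat.mul_comm]
          exact hn
        rw [expTotal_formula P w hε0.le hε1.le n]
        have h1 := E_bound P w hε0.le hε1.le n
        rw [← hp, ← hLr, ← hβ] at h1
        have hmono : ∑ i ∈ Finset.range Q, (1-ε)^i
            ≤ ∑ i ∈ Finset.range (n / (2*w.length+3)), (1-ε)^i :=
          Finset.sum_le_sum_of_subset_of_nonneg (Finset.range_mono hQle)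
            (fun i _ _ => pow_nonneg hb0 i)
        have h2 : β * (∑ i ∈ Finset.range (n / (2*w.length+3)), (1-ε)^i)
            ≤ β * ∑ i ∈ Finset.range Q, (1-ε)^i :=
          mul_le_mul_of_nonpos_left hmono hβ0
        calc ∑ j ∈ Finset.range n, (1-ε)^(mexp w j) * rhoC P w (j % (2*w.length+3))
            ≤ β * (∑ i ∈ Finset.range (n / (2*w.length+3)), (1-ε)^i) + Lr := h1
          _ ≤ β * (∑ i ∈ Finset.range Q, (1-ε)^i) + Lr := by linarith
          _ ≤ (τ - Lr - 2) + Lr := by linarith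
          _ ≤ τ - 1 := by linarith
      have hlim : Filter.limsup
          (fun n => (((PFA.redPOMDP P).expTotalSteps PFA.costRed
            (redStrat P w ε hε0.le hε1.le) n : ℝ) : EReal)) Filter.atTop
          ≤ ((τ - 1 : ℝ) : EReal) :=
        Filter.limsup_le_of_le (by isBoundedDefault)
          (hEbd.mono fun n h => EReal.coe_le_coe_iff.2 h)
      exact lt_of_le_of_lt hlim (EReal.coe_lt_coe_iff.2 (by linarith))
  refine ⟨?_, main⟩
  unfold POMDP.optCost
  rw [iInf_eq_bot]
  intro b hb
  induction b using EReal.rec with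
  | bot => exact absurd hb (lt_irrefl ⊥)
  | coe x =>
    obtain ⟨σ, hAS, hV⟩ := main (min x 0 - 1) (by
      have := min_le_right x 0
      linarith)
    refine ⟨⟨σ, hAS⟩, lt_of_lt_of_le hV (EReal.coe_le_coe_iff.2 ?_)⟩
    have := min_le_left x 0
    linarith
  | top =>
    obtain ⟨σ, hAS, hV⟩ := main (-1) (by norm_num)
    exact ⟨⟨σ, hAS⟩, hV.trans_le le_top⟩
end
end

section
/- Let P be a probabilistic finite automaton and let G be the reduction POMDP built from P, with target set T={target}. If there exists no word w ∈ A* accepted by P with probability strictly greater than 1/2, then the optimal cost optCost in G equals 1. -/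
open Finset Filter
open scoped Classical

set_option linter.unusedSectionVars false
set_option linter.unnecessarySeqFocus false

noncomputable section

namespace Aux

def listsLen (X : Type) [Fintype X] [DecidableEq X] : ℕ → Finset (List X)
  | 0 => {[]}
  | n+1 => (Finset.univ ×ˢ listsLen X n).image fun p => p.1 :: p.2

lemma mem_listsLen {X : Type} [Fintype X] [DecidableEq X] (n : ℕ) (l : List X) :
    l ∈ listsLen X n ↔ l.length = n := by
  induction n generalizing l with
  | zero => simp [listsLen, List.length_eq_zero_iff]
  | succ n ih =>
    cases l with
    | nil => simp [listsLen]
    | cons x t => simp [listsLen, ih]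

variable {S A Z : Type} [Fintype S] [Fintype A] [Fintype Z] [DecidableEq S] [DecidableEq A]
variable (M : POMDP S A Z) (σ : Strategy S A Z M.obs)

lemma hprobAux_nil_succ (n : ℕ) (s : S) : M.hprobAux σ (n+1) s [] = 0 := by
  simp [POMDP.hprobAux]

lemma hprobAux_cons (n : ℕ) (s : S) (a : A) (s' : S) (rest : List (A × S)) :
    M.hprobAux σ (n+1) s ((a, s') :: rest)
      = M.hprobAux σ n s' rest * σ.act (s', rest) a * M.δ s' a s := by
  simp [POMDP.hprobAux]

lemma hprobAux_nonneg : ∀ (n : ℕ) (s : S) (l : List (A × S)), 0 ≤ M.hprobAux σ n s l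
  | 0, s, l => by
      simp only [POMDP.hprobAux]
      split_ifs
      · exact M.init_nonneg s
      · exact le_refl 0
  | n+1, s, [] => le_of_eq (hprobAux_nil_succ M σ n s).symm
  | n+1, s, (a, s') :: rest => by
      rw [hprobAux_cons]
      exact mul_nonneg (mul_nonneg (hprobAux_nonneg n s' rest) (σ.act_nonneg _ a))
        (M.δ_nonneg s' a s)

lemma hprob_nonneg (n : ℕ) (h : Hist S A) : 0 ≤ M.hprob σ n h :=
  hprobAux_nonneg M σ n h.1 h.2

lemma hprobAux_len : ∀ (n : ℕ) (s : S) (l : List (A × S)),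
    l.length ≠ n → M.hprobAux σ n s l = 0
  | 0, s, l, hl => by
      simp only [POMDP.hprobAux]
      rw [if_neg]
      intro h; exact hl (by simp [h])
  | n+1, s, [], _ => hprobAux_nil_succ M σ n s
  | n+1, s, (a, s') :: rest, hl => by
      rw [hprobAux_cons, hprobAux_len n s' rest (by simpa using hl)]
      ring

lemma sum_hprob : ∀ n : ℕ, ∑ q, ∑ l ∈ listsLen (A × S) n, M.hprob σ n (q, l) = 1
  | 0 => by
      simp [listsLen, POMDP.hprob, POMDP.hprobAux, M.init_sum]
  | n+1 => by
      have inj : ∀ p ∈ (((Finset.univ : Finset (A × S)) ×ˢ listsLen (A × S) n)),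
          ∀ p' ∈ (((Finset.univ : Finset (A × S)) ×ˢ listsLen (A × S) n)),
          (fun (p : (A × S) × List (A × S)) => p.1 :: p.2) p
            = (fun (p : (A × S) × List (A × S)) => p.1 :: p.2) p' → p = p' := by
        intro p _ p' _ h
        simpa [Prod.ext_iff] using h
      have key : ∀ q : S, ∑ l ∈ listsLen (A × S) (n+1), M.hprob σ (n+1) (q, l)
          = ∑ p ∈ ((Finset.univ : Finset (A × S)) ×ˢ listsLen (A × S) n),
              M.hprobAux σ n p.1.2 p.2 * σ.act (p.1.2, p.2) p.1.1 * M.δ p.1.2 p.1.1 q := by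
        intro q
        rw [listsLen]
        rw [Finset.sum_image inj]
        refine Finset.sum_congr rfl ?_
        rintro ⟨⟨a, s'⟩, rest⟩ _
        exact hprobAux_cons M σ n q a s' rest
      calc ∑ q, ∑ l ∈ listsLen (A × S) (n+1), M.hprob σ (n+1) (q, l)
          = ∑ q, ∑ p ∈ ((Finset.univ : Finset (A × S)) ×ˢ listsLen (A × S) n),
              M.hprobAux σ n p.1.2 p.2 * σ.act (p.1.2, p.2) p.1.1 * M.δ p.1.2 p.1.1 q := by
            exact Finset.sum_congr rfl fun q _ => key q
        _ = ∑ p ∈ ((Finset.univ : Finset (A × S)) ×ˢ listsLen (A × S) n),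
              M.hprobAux σ n p.1.2 p.2 * σ.act (p.1.2, p.2) p.1.1 * ∑ q, M.δ p.1.2 p.1.1 q := by
            rw [Finset.sum_comm]
            exact Finset.sum_congr rfl fun p _ => by rw [Finset.mul_sum]
        _ = ∑ p ∈ ((Finset.univ : Finset (A × S)) ×ˢ listsLen (A × S) n),
              M.hprobAux σ n p.1.2 p.2 * σ.act (p.1.2, p.2) p.1.1 := by
            refine Finset.sum_congr rfl fun p _ => by rw [M.δ_sum, mul_one]
        _ = ∑ ars ∈ (Finset.univ : Finset (A × S)), ∑ rest ∈ listsLen (A × S) n,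
              M.hprobAux σ n ars.2 rest * σ.act (ars.2, rest) ars.1 := by
            rw [Finset.sum_product]
        _ = ∑ s' : S, ∑ a : A, ∑ rest ∈ listsLen (A × S) n,
              M.hprobAux σ n s' rest * σ.act (s', rest) a := by
            rw [Fintype.sum_prod_type, Finset.sum_comm]
        _ = ∑ s' : S, ∑ rest ∈ listsLen (A × S) n,
              M.hprobAux σ n s' rest * ∑ a : A, σ.act (s', rest) a := by
            refine Finset.sum_congr rfl fun s' _ => ?_
            rw [Finset.sum_comm]
            exact Finset.sum_congr rfl fun rest _ => by rw [Finset.mul_sum]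
        _ = 1 := by
            simp only [σ.act_sum, mul_one]
            exact sum_hprob n

lemma hprob_zero_of_not_mem (n : ℕ) (h : Hist S A)
    (hh : h ∉ ((Finset.univ : Finset S) ×ˢ listsLen (A × S) n)) : M.hprob σ n h = 0 := by
  apply hprobAux_len
  intro hlen
  exact hh (by simp [Finset.mem_product, mem_listsLen, hlen])

lemma probReachBy_eq (T : Set S) (n : ℕ) :
    M.probReachBy T σ n
      = ∑ q, ∑ l ∈ listsLen (A × S) n,
          (if POMDP.visitsT T (q, l) then M.hprob σ n (q, l) else 0) := by
  rw [POMDP.probReachBy,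
    tsum_eq_sum (s := (Finset.univ : Finset S) ×ˢ listsLen (A × S) n)
      (f := fun h : Hist S A => if POMDP.visitsT T h then M.hprob σ n h else 0)
      (fun h hh => by simp only [hprob_zero_of_not_mem M σ n h hh, ite_self]),
    Finset.sum_product]

lemma expTotalSteps_eq (c : S → A → ℝ) (n : ℕ) :
    M.expTotalSteps c σ n
      = ∑ q, ∑ l ∈ listsLen (A × S) n, M.hprob σ n (q, l) * POMDP.totalCostH c (q, l) := by
  rw [POMDP.expTotalSteps,
    tsum_eq_sum (s := (Finset.univ : Finset S) ×ˢ listsLen (A × S) n)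
      (f := fun h : Hist S A => M.hprob σ n h * POMDP.totalCostH c h)
      (fun h hh => by simp only [hprob_zero_of_not_mem M σ n h hh, zero_mul]),
    Finset.sum_product]

lemma probReachBy_le_one (T : Set S) (n : ℕ) : M.probReachBy T σ n ≤ 1 := by
  rw [probReachBy_eq]
  calc ∑ q, ∑ l ∈ listsLen (A × S) n, (if POMDP.visitsT T (q, l) then M.hprob σ n (q, l) else 0)
      ≤ ∑ q, ∑ l ∈ listsLen (A × S) n, M.hprob σ n (q, l) := by
        refine Finset.sum_le_sum fun q _ => Finset.sum_le_sum fun l _ => ?_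
        split_ifs
        · exact le_refl _
        · exact hprob_nonneg M σ n _
    _ = 1 := sum_hprob M σ n

lemma probReachBy_nonneg (T : Set S) (n : ℕ) : 0 ≤ M.probReachBy T σ n := by
  rw [probReachBy_eq]
  refine Finset.sum_nonneg fun q _ => Finset.sum_nonneg fun l _ => ?_
  split_ifs
  · exact hprob_nonneg M σ n _
  · exact le_refl 0

lemma visitsT_cons (T : Set S) (q s' : S) (a : A) (rest : List (A × S)) :
    POMDP.visitsT T ((s', rest) : Hist S A) → POMDP.visitsT T ((q, (a, s') :: rest) : Hist S A) := by
  rintro (h | ⟨p, hp, hp2⟩)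
  · exact Or.inr ⟨(a, s'), by simp, h⟩
  · exact Or.inr ⟨p, by simp [hp], hp2⟩

/-- generic unfolding of a one-step sum -/
lemma sum_succ (n : ℕ) (f : S → List (A × S) → ℝ) :
    ∑ q, ∑ l ∈ listsLen (A × S) (n+1), M.hprob σ (n+1) (q, l) * f q l
      = ∑ a, ∑ s', ∑ rest ∈ listsLen (A × S) n, ∑ q,
          M.hprobAux σ n s' rest * σ.act (s', rest) a * M.δ s' a q * f q ((a, s') :: rest) := by
  have inj : ∀ p ∈ ((Finset.univ : Finset (A × S)) ×ˢ listsLen (A × S) n),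
      ∀ p' ∈ ((Finset.univ : Finset (A × S)) ×ˢ listsLen (A × S) n),
      (fun (p : (A × S) × List (A × S)) => p.1 :: p.2) p
        = (fun (p : (A × S) × List (A × S)) => p.1 :: p.2) p' → p = p' := by
    intro p _ p' _ h
    simpa [Prod.ext_iff] using h
  calc ∑ q, ∑ l ∈ listsLen (A × S) (n+1), M.hprob σ (n+1) (q, l) * f q l
      = ∑ q, ∑ p ∈ ((Finset.univ : Finset (A × S)) ×ˢ listsLen (A × S) n),
          M.hprobAux σ n p.1.2 p.2 * σ.act (p.1.2, p.2) p.1.1 * M.δ p.1.2 p.1.1 q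
            * f q (p.1 :: p.2) := by
        refine Finset.sum_congr rfl fun q _ => ?_
        rw [listsLen, Finset.sum_image inj]
        refine Finset.sum_congr rfl ?_
        rintro ⟨⟨a, s'⟩, rest⟩ _
        rw [show M.hprob σ (n+1) (q, (a, s') :: rest)
          = M.hprobAux σ n s' rest * σ.act (s', rest) a * M.δ s' a q from
            hprobAux_cons M σ n q a s' rest]
    _ = ∑ p ∈ ((Finset.univ : Finset (A × S)) ×ˢ listsLen (A × S) n), ∑ q,
          M.hprobAux σ n p.1.2 p.2 * σ.act (p.1.2, p.2) p.1.1 * M.δ p.1.2 p.1.1 q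
            * f q (p.1 :: p.2) := Finset.sum_comm
    _ = ∑ x : A × S, ∑ rest ∈ listsLen (A × S) n, ∑ q,
          M.hprobAux σ n x.2 rest * σ.act (x.2, rest) x.1 * M.δ x.2 x.1 q
            * f q (x :: rest) := by rw [Finset.sum_product]
    _ = ∑ a, ∑ s', ∑ rest ∈ listsLen (A × S) n, ∑ q,
          M.hprobAux σ n s' rest * σ.act (s', rest) a * M.δ s' a q
            * f q ((a, s') :: rest) := by rw [Fintype.sum_prod_type]

lemma probReachBy_mono (T : Set S) : Monotone fun n => M.probReachBy T σ n := by
  refine monotone_nat_of_le_succ fun n => ?_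
  have ind : ∀ (m : ℕ) (h : Hist S A),
      (if POMDP.visitsT T h then M.hprob σ m h else 0)
        = M.hprob σ m h * (if POMDP.visitsT T h then 1 else 0) := by
    intro m h
    split_ifs
    · rw [mul_one]
    · rw [mul_zero]
  rw [probReachBy_eq, probReachBy_eq]
  simp only [ind]
  rw [sum_succ M σ n (fun q l => if POMDP.visitsT T (q, l) then 1 else 0)]
  have expand : ∑ q, ∑ l ∈ listsLen (A × S) n,
        M.hprob σ n (q, l) * (if POMDP.visitsT T (q, l) then 1 else 0)
      = ∑ a, ∑ s', ∑ rest ∈ listsLen (A × S) n, ∑ q,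
          M.hprobAux σ n s' rest * σ.act (s', rest) a * M.δ s' a q
            * (if POMDP.visitsT T (s', rest) then 1 else 0) := by
    calc ∑ s', ∑ rest ∈ listsLen (A × S) n,
          M.hprob σ n (s', rest) * (if POMDP.visitsT T (s', rest) then 1 else 0)
        = ∑ s', ∑ rest ∈ listsLen (A × S) n, ∑ a,
            σ.act (s', rest) a * (M.hprobAux σ n s' rest
              * (if POMDP.visitsT T (s', rest) then 1 else 0)) := by
          refine Finset.sum_congr rfl fun s' _ => Finset.sum_congr rfl fun rest _ => ?_
          rw [← Finset.sum_mul, σ.act_sum, one_mul]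
          rfl
      _ = ∑ s', ∑ rest ∈ listsLen (A × S) n, ∑ a, ∑ q,
            M.δ s' a q * (σ.act (s', rest) a * (M.hprobAux σ n s' rest
              * (if POMDP.visitsT T (s', rest) then 1 else 0))) := by
          refine Finset.sum_congr rfl fun s' _ => Finset.sum_congr rfl fun rest _ =>
            Finset.sum_congr rfl fun a _ => ?_
          rw [← Finset.sum_mul, M.δ_sum, one_mul]
      _ = ∑ s', ∑ rest ∈ listsLen (A × S) n, ∑ a, ∑ q,
            M.hprobAux σ n s' rest * σ.act (s', rest) a * M.δ s' a q
              * (if POMDP.visitsT T (s', rest) then 1 else 0) := by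
          refine Finset.sum_congr rfl fun s' _ => Finset.sum_congr rfl fun rest _ =>
            Finset.sum_congr rfl fun a _ => Finset.sum_congr rfl fun q _ => ?_
          ring
      _ = ∑ s', ∑ a, ∑ rest ∈ listsLen (A × S) n, ∑ q,
            M.hprobAux σ n s' rest * σ.act (s', rest) a * M.δ s' a q
              * (if POMDP.visitsT T (s', rest) then 1 else 0) :=
          Finset.sum_congr rfl fun s' _ => Finset.sum_comm
      _ = ∑ a, ∑ s', ∑ rest ∈ listsLen (A × S) n, ∑ q,
            M.hprobAux σ n s' rest * σ.act (s', rest) a * M.δ s' a q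
              * (if POMDP.visitsT T (s', rest) then 1 else 0) :=
          Finset.sum_comm
  rw [expand]
  refine Finset.sum_le_sum fun a _ => Finset.sum_le_sum fun s' _ =>
    Finset.sum_le_sum fun rest _ => Finset.sum_le_sum fun q _ => ?_
  have hnn : 0 ≤ M.hprobAux σ n s' rest * σ.act (s', rest) a * M.δ s' a q :=
    mul_nonneg (mul_nonneg (hprobAux_nonneg M σ n s' rest) (σ.act_nonneg _ a))
      (M.δ_nonneg s' a q)
  refine mul_le_mul_of_nonneg_left ?_ hnn
  by_cases hv : POMDP.visitsT T ((s', rest) : Hist S A)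
  · rw [if_pos hv, if_pos (visitsT_cons T q s' a rest hv)]
  · rw [if_neg hv]
    split_ifs
    · exact zero_le_one
    · exact le_refl 0


section Red

variable {S A : Type} [Fintype S] [Fintype A] [DecidableEq S] [DecidableEq A]
variable (P : PFA S A) (σ : Strategy (PFA.RSt S) (PFA.RAct A) Unit (PFA.redPOMDP P).obs)

open PFA

/-- The strategy's action distribution depends only on the action word. -/
def alphaA (w : List (RAct A)) (a : RAct A) : ℝ :=
  σ.act (stTarget S, w.map fun x => (x, stTarget S)) a

lemma act_word (w : List (RAct A)) (q : RSt S) (l : List (RAct A × RSt S))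
    (hl : l.map Prod.fst = w) : σ.act (q, l) = alphaA P σ w := by
  have : σ.act (q, l) = σ.act (stTarget S, w.map fun x => (x, stTarget S)) := by
    apply σ.obsBased
    show ((PFA.redPOMDP P).obs q, _) = _
    rw [← hl]
    simp [obsHist, List.map_map, PFA.redPOMDP]
  rw [this]
  rfl

lemma redPOMDP_δ : (PFA.redPOMDP P).δ = PFA.redδ P := rfl

lemma alphaA_nonneg (w : List (RAct A)) (a : RAct A) : 0 ≤ alphaA P σ w a :=
  σ.act_nonneg _ a

/-- Lists of history entries whose action word is `w`. -/
def pths : List (RAct A) → Finset (List (RAct A × RSt S))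
  | [] => {[]}
  | a :: w => ((Finset.univ : Finset (RSt S)) ×ˢ pths w).image fun p => (a, p.1) :: p.2

lemma mem_pths : ∀ (w : List (RAct A)) (l : List (RAct A × RSt S)),
    l ∈ pths (S := S) (A := A) w ↔ l.map Prod.fst = w
  | [], l => by cases l <;> simp [pths]
  | a :: w, l => by
      cases l with
      | nil => simp [pths]
      | cons x t =>
        obtain ⟨xa, xs⟩ := x
        simp only [pths, Finset.mem_image, Finset.mem_product, Finset.mem_univ, true_and,
          List.map_cons, List.cons.injEq]
        constructor
        · rintro ⟨⟨s', rest⟩, hp, he1, rfl⟩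
          injection he1 with h3 h4
          subst h3
          subst h4
          exact ⟨rfl, (mem_pths w rest).1 hp⟩
        · rintro ⟨h1, h2⟩
          subst h1
          exact ⟨(xs, t), (mem_pths w t).2 h2, rfl, rfl⟩

/-- mass at state `q` over histories with action word `w`. -/
def muW (w : List (RAct A)) (q : RSt S) : ℝ :=
  ∑ l ∈ pths (S := S) w, (PFA.redPOMDP P).hprob σ w.length (q, l)

/-- expected accumulated cost over histories with action word `w`. -/
def EW (w : List (RAct A)) : ℝ :=
  ∑ q, ∑ l ∈ pths (S := S) w,
    (PFA.redPOMDP P).hprob σ w.length (q, l) * POMDP.totalCostH costRed (q, l)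

lemma muW_nonneg (w : List (RAct A)) (q : RSt S) : 0 ≤ muW P σ w q :=
  Finset.sum_nonneg fun l _ => hprob_nonneg _ σ _ _

lemma muW_nil (q : RSt S) : muW P σ [] q = dirac (Sum.inl (P.s0, true)) q := by
  simp [muW, pths, POMDP.hprob, POMDP.hprobAux, PFA.redPOMDP]

lemma pths_cons_inj (w : List (RAct A)) (a : RAct A) :
    ∀ p ∈ ((Finset.univ : Finset (RSt S)) ×ˢ pths (S := S) (A := A) w),
    ∀ p' ∈ ((Finset.univ : Finset (RSt S)) ×ˢ pths (S := S) (A := A) w),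
    (fun (p : RSt S × List (RAct A × RSt S)) => (a, p.1) :: p.2) p
      = (fun (p : RSt S × List (RAct A × RSt S)) => (a, p.1) :: p.2) p' → p = p' := by
  intro p _ p' _ h
  simpa [Prod.ext_iff] using h

lemma muW_cons (w : List (RAct A)) (a : RAct A) (q : RSt S) :
    muW P σ (a :: w) q
      = alphaA P σ w a * ∑ s', muW P σ w s' * PFA.redδ P s' a q := by
  have hM : ∀ (s' : RSt S) (rest : List (RAct A × RSt S)), rest ∈ pths (S := S) w →
      (PFA.redPOMDP P).hprob σ (w.length + 1) (q, (a, s') :: rest)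
        = (PFA.redPOMDP P).hprobAux σ w.length s' rest * alphaA P σ w a
            * PFA.redδ P s' a q := by
    intro s' rest hrest
    rw [POMDP.hprob]
    rw [hprobAux_cons, act_word P σ w s' rest ((mem_pths w rest).1 hrest), redPOMDP_δ]
  calc muW P σ (a :: w) q
      = ∑ p ∈ ((Finset.univ : Finset (RSt S)) ×ˢ pths (S := S) w),
          (PFA.redPOMDP P).hprob σ (w.length + 1) (q, (a, p.1) :: p.2) := by
        rw [muW, show (a :: w).length = w.length + 1 from rfl, pths,
          Finset.sum_image (pths_cons_inj (S := S) (A := A) w a)]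
    _ = ∑ s', ∑ rest ∈ pths (S := S) w,
          (PFA.redPOMDP P).hprobAux σ w.length s' rest * alphaA P σ w a
            * PFA.redδ P s' a q := by
        rw [Finset.sum_product]
        exact Finset.sum_congr rfl fun s' _ => Finset.sum_congr rfl fun rest hr =>
          hM s' rest hr
    _ = alphaA P σ w a * ∑ s', muW P σ w s' * PFA.redδ P s' a q := by
        rw [Finset.mul_sum]
        refine Finset.sum_congr rfl fun s' _ => ?_
        rw [muW, Finset.sum_mul, Finset.mul_sum]
        refine Finset.sum_congr rfl fun rest _ => ?_
        simp only [POMDP.hprob]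
        ring

lemma totalCostH_cons (c : RSt S → RAct A → ℝ) (q s' : RSt S) (a : RAct A)
    (rest : List (RAct A × RSt S)) :
    POMDP.totalCostH c (q, (a, s') :: rest)
      = POMDP.totalCostH c (s', rest) + c s' a := rfl

lemma EW_cons (w : List (RAct A)) (a : RAct A) :
    EW P σ (a :: w)
      = alphaA P σ w a * (EW P σ w + ∑ s', muW P σ w s' * costRed s' a) := by
  have hM : ∀ (s' : RSt S) (rest : List (RAct A × RSt S)), rest ∈ pths (S := S) w →
      ∀ q, (PFA.redPOMDP P).hprob σ (w.length + 1) (q, (a, s') :: rest)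
          * POMDP.totalCostH costRed (q, (a, s') :: rest)
        = (PFA.redPOMDP P).hprobAux σ w.length s' rest * alphaA P σ w a
            * PFA.redδ P s' a q
            * (POMDP.totalCostH costRed (s', rest) + costRed s' a) := by
    intro s' rest hrest q
    rw [totalCostH_cons, POMDP.hprob]
    rw [hprobAux_cons, act_word P σ w s' rest ((mem_pths w rest).1 hrest), redPOMDP_δ]
  calc EW P σ (a :: w)
      = ∑ q, ∑ p ∈ ((Finset.univ : Finset (RSt S)) ×ˢ pths (S := S) w),
          (PFA.redPOMDP P).hprob σ (w.length + 1) (q, (a, p.1) :: p.2)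
            * POMDP.totalCostH costRed (q, (a, p.1) :: p.2) := by
        rw [EW]
        refine Finset.sum_congr rfl fun q _ => ?_
        rw [show (a :: w).length = w.length + 1 from rfl, pths,
          Finset.sum_image (pths_cons_inj (S := S) (A := A) w a)]
    _ = ∑ q, ∑ s', ∑ rest ∈ pths (S := S) w,
          (PFA.redPOMDP P).hprobAux σ w.length s' rest * alphaA P σ w a
            * PFA.redδ P s' a q
            * (POMDP.totalCostH costRed (s', rest) + costRed s' a) := by
        refine Finset.sum_congr rfl fun q _ => ?_
        rw [Finset.sum_product]
        exact Finset.sum_congr rfl fun s' _ => Finset.sum_congr rfl fun rest hr =>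
          hM s' rest hr q
    _ = ∑ s', ∑ rest ∈ pths (S := S) w,
          (PFA.redPOMDP P).hprobAux σ w.length s' rest * alphaA P σ w a
            * (∑ q, PFA.redδ P s' a q)
            * (POMDP.totalCostH costRed (s', rest) + costRed s' a) := by
        rw [Finset.sum_comm]
        refine Finset.sum_congr rfl fun s' _ => ?_
        rw [Finset.sum_comm]
        refine Finset.sum_congr rfl fun rest _ => ?_
        simp only [Finset.mul_sum, Finset.sum_mul]
        try exact (Finset.sum_congr rfl fun q _ => by ring).symm
    _ = alphaA P σ w a * (EW P σ w + ∑ s', muW P σ w s' * costRed s' a) := by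
        simp only [PFA.redδ_sum, mul_one, mul_add, Finset.sum_add_distrib]
        congr 1
        · rw [EW, Finset.mul_sum]
          refine Finset.sum_congr rfl fun s' _ => ?_
          rw [Finset.mul_sum]
          refine Finset.sum_congr rfl fun rest _ => ?_
          simp only [POMDP.hprob]
          try ring
        · rw [Finset.mul_sum]
          refine Finset.sum_congr rfl fun s' _ => ?_
          rw [muW, Finset.sum_mul, Finset.mul_sum]
          refine Finset.sum_congr rfl fun rest _ => ?_
          simp only [POMDP.hprob]
          try ring

end Red


section Red2

variable {S A : Type} [Fintype S] [Fintype A] [DecidableEq S] [DecidableEq A]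

open PFA

/-- the potential -/
def phi : RSt S → ℝ
  | Sum.inl (_, true) => 0
  | Sum.inl (_, false) => -1
  | Sum.inr i => if i = 0 then -1 else if i = 1 then 1 else if i = 2 then 0 else 1

lemma phi_le_one (q : RSt S) : phi q ≤ 1 := by
  rcases q with ⟨s, _ | _⟩ | i <;> simp [phi] <;> split_ifs <;> norm_num

lemma sum_RSt (f : RSt S → ℝ) :
    ∑ q, f q = ∑ s, f (Sum.inl (s, true)) + ∑ s, f (Sum.inl (s, false))
      + (f (Sum.inr 0) + f (Sum.inr 1) + f (Sum.inr 2) + f (Sum.inr 3)) := by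
  rw [Fintype.sum_sum_type, Fintype.sum_prod_type, Fin.sum_univ_four]
  simp only [Fintype.sum_bool, Finset.sum_add_distrib]
  try ring

lemma sum_dirac_mul (t : RSt S) (f : RSt S → ℝ) : ∑ q, dirac t q * f q = f t := by
  simp only [dirac, ite_mul, one_mul, zero_mul]
  rw [Finset.sum_ite_eq' Finset.univ t f]
  simp

lemma sum_embedPos_mul_phi (p : S → ℝ) :
    ∑ q, PFA.embedPos p q * phi q = 0 := by
  rw [sum_RSt]
  simp [PFA.embedPos, phi]

variable (P : PFA S A)

lemma stepD_eval (d : S → ℝ) (a : A) (s' : S) :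
    P.stepD d a s' = ∑ s, d s * P.δ s a s' := rfl

lemma wordDist_nonneg : ∀ (u : List A) (s : S), 0 ≤ P.wordDist u s := by
  have key : ∀ (u : List A) (d : S → ℝ), (∀ s, 0 ≤ d s) → ∀ s, 0 ≤ u.foldl P.stepD d s := by
    intro u
    induction u with
    | nil => intro d hd s; exact hd s
    | cons a u ih =>
      intro d hd s
      refine ih (P.stepD d a) (fun s' => ?_) s
      exact Finset.sum_nonneg fun t _ => mul_nonneg (hd t) (P.δ_nonneg t a s')
  intro u s
  exact key u (dirac P.s0) (dirac_nonneg P.s0) s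

lemma wordDist_sum (u : List A) : ∑ s, P.wordDist u s = 1 := by
  have key : ∀ (u : List A) (d : S → ℝ), ∑ s, u.foldl P.stepD d s = ∑ s, d s := by
    intro u
    induction u with
    | nil => intro d; rfl
    | cons a u ih =>
      intro d
      rw [List.foldl_cons, ih (P.stepD d a)]
      calc ∑ s', ∑ s, d s * P.δ s a s' = ∑ s, ∑ s', d s * P.δ s a s' := Finset.sum_comm
        _ = ∑ s, d s := by
            refine Finset.sum_congr rfl fun s _ => ?_
            rw [← Finset.mul_sum, P.δ_sum, mul_one]
  rw [PFA.wordDist, key u (dirac P.s0), dirac_sum]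

lemma wordDist_concat (u : List A) (a : A) :
    P.wordDist (u ++ [a]) = P.stepD (P.wordDist u) a := by
  simp [PFA.wordDist, List.foldl_append]

variable (σ : Strategy (PFA.RSt S) (PFA.RAct A) Unit (PFA.redPOMDP P).obs)

/-- the shape invariant for per-word state masses -/
def ShapeP (μf : RSt S → ℝ) : Prop :=
  ∃ c u, 0 ≤ c ∧
    (((∀ s, μf (Sum.inl (s, true)) = c * P.wordDist u s) ∧ ∀ s, μf (Sum.inl (s, false)) = 0)
     ∨ ((∀ s, μf (Sum.inl (s, false)) = c * P.wordDist u s) ∧ ∀ s, μf (Sum.inl (s, true)) = 0))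

lemma muW_letter_true (w : List (RAct A)) (a0 : A) (s : S) :
    muW P σ (Sum.inl a0 :: w) (Sum.inl (s, true))
      = alphaA P σ w (Sum.inl a0)
          * ∑ s', muW P σ w (Sum.inl (s', false)) * P.δ s' a0 s := by
  rw [muW_cons]
  congr 1
  rw [sum_RSt (f := fun q' => muW P σ w q' * PFA.redδ P q' (Sum.inl a0) (Sum.inl (s, true)))]
  simp [PFA.redδ, dirac, ite_apply, PFA.stLosing, PFA.stTarget, PFA.stGood, PFA.stBad, PFA.embedPos]

lemma muW_letter_false (w : List (RAct A)) (a0 : A) (s : S) :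
    muW P σ (Sum.inl a0 :: w) (Sum.inl (s, false)) = 0 := by
  rw [muW_cons]
  convert mul_zero (alphaA P σ w (Sum.inl a0)) using 2
  rw [sum_RSt (f := fun q' => muW P σ w q' * PFA.redδ P q' (Sum.inl a0) (Sum.inl (s, false)))]
  simp [PFA.redδ, dirac, ite_apply, PFA.stLosing, PFA.stTarget, PFA.stGood, PFA.stBad, PFA.embedPos]

lemma muW_dollar_false (w : List (RAct A)) (s : S) :
    muW P σ (Sum.inr 1 :: w) (Sum.inl (s, false))
      = alphaA P σ w (Sum.inr 1) * muW P σ w (Sum.inl (s, true)) := by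
  rw [muW_cons]
  congr 1
  rw [sum_RSt (f := fun q' => muW P σ w q' * PFA.redδ P q' (Sum.inr 1) (Sum.inl (s, false)))]
  simp [PFA.redδ, dirac, ite_apply, PFA.stLosing, PFA.stTarget, PFA.stGood, PFA.stBad, PFA.embedPos]
  try rw [Finset.sum_ite_eq' Finset.univ s (fun s' => muW P σ w (Sum.inl (s', true)))]
  try simp

lemma muW_dollar_true (w : List (RAct A)) (s : S) :
    muW P σ (Sum.inr 1 :: w) (Sum.inl (s, true)) = 0 := by
  rw [muW_cons]
  convert mul_zero (alphaA P σ w (Sum.inr 1)) using 2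
  rw [sum_RSt (f := fun q' => muW P σ w q' * PFA.redδ P q' (Sum.inr 1) (Sum.inl (s, true)))]
  simp [PFA.redδ, dirac, ite_apply, PFA.stLosing, PFA.stTarget, PFA.stGood, PFA.stBad, PFA.embedPos]

lemma muW_hash_true (w : List (RAct A)) (s : S) :
    muW P σ (Sum.inr 0 :: w) (Sum.inl (s, true))
      = alphaA P σ w (Sum.inr 0)
          * ((muW P σ w (stGood S) + muW P σ w (stBad S)) * P.wordDist [] s) := by
  rw [muW_cons]
  congr 1
  rw [sum_RSt (f := fun q' => muW P σ w q' * PFA.redδ P q' (Sum.inr 0) (Sum.inl (s, true)))]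
  simp only [PFA.wordDist, List.foldl_nil]
  simp [PFA.redδ, dirac, ite_apply, PFA.stLosing, PFA.stTarget, PFA.stGood, PFA.stBad, PFA.embedPos]
  split_ifs with h <;> ring

lemma muW_hash_false (w : List (RAct A)) (s : S) :
    muW P σ (Sum.inr 0 :: w) (Sum.inl (s, false)) = 0 := by
  rw [muW_cons]
  convert mul_zero (alphaA P σ w (Sum.inr 0)) using 2
  rw [sum_RSt (f := fun q' => muW P σ w q' * PFA.redδ P q' (Sum.inr 0) (Sum.inl (s, false)))]
  simp [PFA.redδ, dirac, ite_apply, PFA.stLosing, PFA.stTarget, PFA.stGood, PFA.stBad, PFA.embedPos]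

lemma muW_check_inl (w : List (RAct A)) (s : S) (b : Bool) :
    muW P σ (Sum.inr 2 :: w) (Sum.inl (s, b)) = 0 := by
  rw [muW_cons]
  convert mul_zero (alphaA P σ w (Sum.inr 2)) using 2
  rw [sum_RSt (f := fun q' => muW P σ w q' * PFA.redδ P q' (Sum.inr 2) (Sum.inl (s, b)))]
  simp [PFA.redδ, dirac, ite_apply, PFA.stLosing, PFA.stTarget, PFA.stGood, PFA.stBad, PFA.embedPos]

lemma shape_muW (w : List (RAct A)) : ShapeP P (muW P σ w) := by
  induction w with
  | nil =>
    refine ⟨1, [], zero_le_one, Or.inl ⟨fun s => ?_, fun s => ?_⟩⟩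
    · rw [muW_nil]
      simp [dirac, PFA.wordDist]
    · rw [muW_nil]
      simp [dirac]
  | cons a w ih =>
    obtain ⟨c, u, hc, hcase⟩ := ih
    have hα : 0 ≤ alphaA P σ w a := alphaA_nonneg P σ w a
    rcases a with a0 | j
    · -- letter
      rcases hcase with ⟨h1, h2⟩ | ⟨h1, h2⟩
      · refine ⟨0, [], le_refl 0, Or.inl ⟨fun s => ?_, fun s => ?_⟩⟩
        · rw [muW_letter_true]
          simp [h2]
        · exact muW_letter_false P σ w a0 s
      · refine ⟨alphaA P σ w (Sum.inl a0) * c, u ++ [a0],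
          mul_nonneg hα hc, Or.inl ⟨fun s => ?_, fun s => ?_⟩⟩
        · rw [muW_letter_true, wordDist_concat, stepD_eval]
          simp only [h1]
          rw [Finset.mul_sum, Finset.mul_sum]
          exact Finset.sum_congr rfl fun s' _ => by ring
        · exact muW_letter_false P σ w a0 s
    · have h3 : ∀ j : Fin 3, j = 0 ∨ j = 1 ∨ j = 2 := by decide
      rcases h3 j with rfl | rfl | rfl
      · -- hash
        refine ⟨alphaA P σ w (Sum.inr 0) * (muW P σ w (stGood S) + muW P σ w (stBad S)), [],
          mul_nonneg hα (add_nonneg (muW_nonneg P σ w _) (muW_nonneg P σ w _)),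
          Or.inl ⟨fun s => ?_, fun s => ?_⟩⟩
        · rw [muW_hash_true]
          ring
        · exact muW_hash_false P σ w s
      · -- dollar
        rcases hcase with ⟨h1, h2⟩ | ⟨h1, h2⟩
        · refine ⟨alphaA P σ w (Sum.inr 1) * c, u, mul_nonneg hα hc,
            Or.inr ⟨fun s => ?_, fun s => ?_⟩⟩
          · rw [muW_dollar_false, h1]; ring
          · exact muW_dollar_true P σ w s
        · refine ⟨0, [], le_refl 0, Or.inl ⟨fun s => ?_, fun s => ?_⟩⟩
          · rw [muW_dollar_true]
            simp
          · rw [muW_dollar_false, h2 s]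
            simp
      · -- check
        refine ⟨0, [], le_refl 0, Or.inl ⟨fun s => ?_, fun s => ?_⟩⟩
        · simp [muW_check_inl]
        · simp [muW_check_inl]

def gval (q' : RSt S) (a : RAct A) : ℝ :=
  costRed q' a + (∑ q, PFA.redδ P q' a q * phi q) - PFA.redδ P q' a (stTarget S)
    + (if q' = stTarget S then (1:ℝ) else 0) - phi q'

def KW (w : List (RAct A)) : ℝ :=
  EW P σ w + ∑ q, muW P σ w q * phi q - muW P σ w (stTarget S)

lemma muW_target_eq (w : List (RAct A)) :
    muW P σ w (stTarget S)
      = ∑ q', muW P σ w q' * (if q' = stTarget S then (1:ℝ) else 0) := by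
  have h : ∀ q' : RSt S, muW P σ w q' * (if q' = stTarget S then (1:ℝ) else 0)
      = if q' = stTarget S then muW P σ w q' else 0 := by
    intro q'
    split_ifs <;> simp
  rw [Finset.sum_congr rfl fun q' _ => h q',
    Finset.sum_ite_eq' Finset.univ (stTarget S) (muW P σ w)]
  simp

lemma KW_cons (w : List (RAct A)) (a : RAct A) :
    KW P σ (a :: w)
      = alphaA P σ w a * (KW P σ w + ∑ q', muW P σ w q' * gval P q' a) := by
  have hphi : ∑ q, muW P σ (a :: w) q * phi q
      = alphaA P σ w a
          * ∑ q', muW P σ w q' * (∑ q, PFA.redδ P q' a q * phi q) := by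
    calc ∑ q, muW P σ (a :: w) q * phi q
        = ∑ q, ∑ q', alphaA P σ w a
            * (muW P σ w q' * (PFA.redδ P q' a q * phi q)) := by
          refine Finset.sum_congr rfl fun q _ => ?_
          rw [muW_cons, Finset.mul_sum, Finset.sum_mul]
          exact Finset.sum_congr rfl fun q' _ => by ring
      _ = ∑ q', ∑ q, alphaA P σ w a
            * (muW P σ w q' * (PFA.redδ P q' a q * phi q)) := Finset.sum_comm
      _ = alphaA P σ w a
            * ∑ q', muW P σ w q' * (∑ q, PFA.redδ P q' a q * phi q) := by
          rw [Finset.mul_sum]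
          refine Finset.sum_congr rfl fun q' _ => ?_
          rw [Finset.mul_sum, Finset.mul_sum]
          try exact Finset.sum_congr rfl fun q _ => by ring
  have hg : ∑ q', muW P σ w q' * gval P q' a
      = (∑ q', muW P σ w q' * costRed q' a)
        + (∑ q', muW P σ w q' * (∑ q, PFA.redδ P q' a q * phi q))
        - (∑ q', muW P σ w q' * PFA.redδ P q' a (stTarget S))
        + (∑ q', muW P σ w q' * (if q' = stTarget S then (1:ℝ) else 0))
        - (∑ q', muW P σ w q' * phi q') := by
    rw [← Finset.sum_add_distrib, ← Finset.sum_sub_distrib, ← Finset.sum_add_distrib,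
      ← Finset.sum_sub_distrib]
    exact Finset.sum_congr rfl fun q' _ => by rw [gval]; ring
  simp only [KW]
  rw [EW_cons, hphi, muW_cons, hg, ← muW_target_eq]
  ring

lemma gval_nonneg_letter (a0 : A) (q' : RSt S) : 0 ≤ gval P q' (Sum.inl a0) := by
  rcases q' with ⟨s, b⟩ | i
  · cases b
    · simp only [gval, PFA.redδ]
      rw [sum_embedPos_mul_phi]
      simp [costRed, phi, dirac, PFA.embedPos, PFA.stLosing, PFA.stTarget, Fin.sum_univ_four]
    · simp only [gval, PFA.redδ]
      rw [sum_dirac_mul]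
      simp [costRed, phi, dirac, PFA.stLosing, PFA.stTarget, Fin.sum_univ_four]
  · rcases (by decide : ∀ i : Fin 4, i = 0 ∨ i = 1 ∨ i = 2 ∨ i = 3) i with rfl | rfl | rfl | rfl <;>
      · simp only [gval, PFA.redδ]
        norm_num
        try rw [sum_dirac_mul]
        simp [costRed, phi, dirac, PFA.stLosing, PFA.stTarget, Fin.sum_univ_four]

lemma gval_nonneg_dollar (q' : RSt S) : 0 ≤ gval P q' (Sum.inr 1) := by
  rcases q' with ⟨s, b⟩ | i
  · cases b <;>
      · simp only [gval, PFA.redδ]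
        norm_num
        try rw [sum_dirac_mul]
        simp [costRed, phi, dirac, PFA.stLosing, PFA.stTarget, Fin.sum_univ_four]
  · rcases (by decide : ∀ i : Fin 4, i = 0 ∨ i = 1 ∨ i = 2 ∨ i = 3) i with rfl | rfl | rfl | rfl <;>
      · simp only [gval, PFA.redδ]
        norm_num
        try rw [sum_dirac_mul]
        simp [costRed, phi, dirac, PFA.stLosing, PFA.stTarget, Fin.sum_univ_four]

lemma gval_nonneg_check (q' : RSt S) : 0 ≤ gval P q' (Sum.inr 2) := by
  rcases q' with ⟨s, b⟩ | i
  · cases b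
    · simp only [gval, PFA.redδ]
      norm_num
      try rw [sum_dirac_mul]
      simp [costRed, phi, dirac, PFA.stLosing, PFA.stTarget, Fin.sum_univ_four]
    · by_cases hs : s = P.s0 <;>
        · simp only [gval, PFA.redδ, hs]
          norm_num
          try rw [sum_dirac_mul]
          simp [costRed, phi, dirac, PFA.stLosing, PFA.stTarget, Fin.sum_univ_four]
  · rcases (by decide : ∀ i : Fin 4, i = 0 ∨ i = 1 ∨ i = 2 ∨ i = 3) i with rfl | rfl | rfl | rfl <;>
      · simp only [gval, PFA.redδ]
        norm_num
        try rw [sum_dirac_mul]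
        simp [costRed, phi, dirac, PFA.stLosing, PFA.stTarget, Fin.sum_univ_four]

lemma gval_hash_false (s : S) :
    gval P (Sum.inl (s, false)) (Sum.inr 0) = if s ∈ P.final then (-1:ℝ) else 1 := by
  by_cases hs : s ∈ P.final <;>
    · simp only [gval, PFA.redδ, hs]
      norm_num
      try rw [sum_dirac_mul]
      simp [costRed, phi, dirac, PFA.stLosing, PFA.stTarget, PFA.stGood, PFA.stBad, Fin.sum_univ_four]

lemma gval_hash_true (s : S) : 0 ≤ gval P (Sum.inl (s, true)) (Sum.inr 0) := by
  simp only [gval, PFA.redδ]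
  norm_num
  try rw [sum_dirac_mul]
  simp [costRed, phi, dirac, PFA.stLosing, PFA.stTarget, Fin.sum_univ_four]

lemma gval_hash_inr (i : Fin 4) : 0 ≤ gval P (Sum.inr i) (Sum.inr 0) := by
  rcases (by decide : ∀ i : Fin 4, i = 0 ∨ i = 1 ∨ i = 2 ∨ i = 3) i with rfl | rfl | rfl | rfl <;>
    · simp only [gval, PFA.redδ]
      norm_num
      try rw [sum_dirac_mul]
      simp [costRed, phi, dirac, PFA.stLosing, PFA.stTarget, PFA.stGood, PFA.stBad, Fin.sum_univ_four]

lemma gsum_nonneg (hhalf : ∀ u, P.accProb u ≤ 1/2) (w : List (RAct A)) (a : RAct A) :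
    0 ≤ ∑ q', muW P σ w q' * gval P q' a := by
  rcases a with a0 | j
  · exact Finset.sum_nonneg fun q' _ =>
      mul_nonneg (muW_nonneg P σ w q') (gval_nonneg_letter P a0 q')
  · rcases (by decide : ∀ j : Fin 3, j = 0 ∨ j = 1 ∨ j = 2) j with rfl | rfl | rfl
    · -- hash
      rw [sum_RSt (f := fun q' => muW P σ w q' * gval P q' (Sum.inr 0))]
      have htrue : 0 ≤ ∑ s, muW P σ w (Sum.inl (s, true))
          * gval P (Sum.inl (s, true)) (Sum.inr 0) :=
        Finset.sum_nonneg fun s _ =>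
          mul_nonneg (muW_nonneg P σ w _) (gval_hash_true P s)
      have hinr : ∀ i : Fin 4, 0 ≤ muW P σ w (Sum.inr i) * gval P (Sum.inr i) (Sum.inr 0) :=
        fun i => mul_nonneg (muW_nonneg P σ w _) (gval_hash_inr P i)
      have hfalse : 0 ≤ ∑ s, muW P σ w (Sum.inl (s, false))
          * gval P (Sum.inl (s, false)) (Sum.inr 0) := by
        obtain ⟨c, u, hc, hcase⟩ := shape_muW P σ w
        rcases hcase with ⟨_, h2⟩ | ⟨h1, _⟩
        · refine le_of_eq (Finset.sum_eq_zero fun s _ => ?_).symm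
          rw [h2 s, zero_mul]
        · have step : ∀ s, muW P σ w (Sum.inl (s, false))
              * gval P (Sum.inl (s, false)) (Sum.inr 0)
                = c * P.wordDist u s - (if s ∈ P.final then 2 * (c * P.wordDist u s) else 0) := by
            intro s
            rw [h1 s, gval_hash_false]
            split_ifs <;> ring
          rw [Finset.sum_congr rfl fun s _ => step s, Finset.sum_sub_distrib]
          have h4 : ∑ s, (if s ∈ P.final then 2 * (c * P.wordDist u s) else 0)
              = 2 * c * ∑ s ∈ P.final, P.wordDist u s := by
            rw [Finset.sum_ite_mem Finset.univ P.final
              (fun s => 2 * (c * P.wordDist u s)), Finset.univ_inter, Finset.mul_sum]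
            exact Finset.sum_congr rfl fun s _ => by ring
          rw [h4, ← Finset.mul_sum, wordDist_sum, mul_one]
          have h5 : P.accProb u ≤ 1/2 := hhalf u
          have h6 : ∑ s ∈ P.final, P.wordDist u s = P.accProb u := rfl
          rw [h6]
          nlinarith [hc, h5]
      have h0 := hinr 0
      have h1 := hinr 1
      have h2 := hinr 2
      have h3 := hinr 3
      linarith
    · exact Finset.sum_nonneg fun q' _ =>
        mul_nonneg (muW_nonneg P σ w q') (gval_nonneg_dollar P q')
    · exact Finset.sum_nonneg fun q' _ =>
        mul_nonneg (muW_nonneg P σ w q') (gval_nonneg_check P q')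

lemma EW_nil : EW P σ [] = 0 := by
  refine Finset.sum_eq_zero fun q _ => Finset.sum_eq_zero fun l hl => ?_
  have : l = [] := by
    rcases Finset.mem_singleton.1 (by simpa [pths] using hl) with h
    exact h
  subst this
  show _ * POMDP.totalCostH costRed (q, []) = 0
  rw [show POMDP.totalCostH costRed (q, []) = 0 from rfl, mul_zero]

lemma KW_nil : KW P σ [] = 0 := by
  rw [KW, EW_nil]
  simp only [muW_nil]
  rw [sum_dirac_mul]
  simp [phi, dirac, PFA.stTarget]

lemma KW_nonneg (hhalf : ∀ u, P.accProb u ≤ 1/2) : ∀ w : List (RAct A), 0 ≤ KW P σ w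
  | [] => le_of_eq (KW_nil P σ).symm
  | a :: w => by
      rw [KW_cons]
      exact mul_nonneg (alphaA_nonneg P σ w a)
        (by
          have := KW_nonneg hhalf w
          have hg := gsum_nonneg P σ hhalf w a
          linarith)

lemma fiber_sum (n : ℕ) (F : RSt S → List (RAct A × RSt S) → ℝ) :
    ∑ q, ∑ l ∈ listsLen ((RAct A) × RSt S) n, F q l
      = ∑ w ∈ listsLen (RAct A) n, ∑ q, ∑ l ∈ pths (S := S) w, F q l := by
  have hmap : ∀ l ∈ listsLen ((RAct A) × RSt S) n,
      l.map Prod.fst ∈ listsLen (RAct A) n := by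
    intro l hl
    rw [mem_listsLen] at hl ⊢
    simp [hl]
  have hfil : ∀ w ∈ listsLen (RAct A) n,
      (listsLen ((RAct A) × RSt S) n).filter (fun l => l.map Prod.fst = w)
        = pths (S := S) w := by
    intro w hw
    ext l
    simp only [Finset.mem_filter, mem_listsLen, mem_pths]
    constructor
    · rintro ⟨_, h⟩; exact h
    · intro h
      refine ⟨?_, h⟩
      rw [mem_listsLen] at hw
      rw [← hw, ← h, List.length_map]
  calc ∑ q, ∑ l ∈ listsLen ((RAct A) × RSt S) n, F q l
      = ∑ q, ∑ w ∈ listsLen (RAct A) n,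
          ∑ l ∈ (listsLen ((RAct A) × RSt S) n).filter (fun l => l.map Prod.fst = w),
            F q l := by
        refine Finset.sum_congr rfl fun q _ => ?_
        exact (Finset.sum_fiberwise_of_maps_to hmap (F q)).symm
    _ = ∑ w ∈ listsLen (RAct A) n, ∑ q,
          ∑ l ∈ (listsLen ((RAct A) × RSt S) n).filter (fun l => l.map Prod.fst = w),
            F q l := Finset.sum_comm
    _ = ∑ w ∈ listsLen (RAct A) n, ∑ q, ∑ l ∈ pths (S := S) w, F q l := by
        refine Finset.sum_congr rfl fun w hw => Finset.sum_congr rfl fun q _ => ?_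
        rw [hfil w hw]

lemma redδ_target_absorb (a : RAct A) (q : RSt S) (h : PFA.redδ P (stTarget S) a q ≠ 0) :
    q = stTarget S := by
  have he : PFA.redδ P (stTarget S) a q = dirac (stTarget S) q := by
    rcases a with a0 | j <;> simp [PFA.redδ, PFA.stTarget]
  by_contra hne
  rw [he, dirac, if_neg hne] at h
  exact h rfl

lemma hprob_visits_target : ∀ (n : ℕ) (q : RSt S) (l : List (RAct A × RSt S)),
    (PFA.redPOMDP P).hprob σ n (q, l) ≠ 0 → POMDP.visitsT (TRed S) ((q, l) : Hist _ _) →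
      q = stTarget S
  | 0, q, l, h0, hv => by
      cases l with
      | nil =>
        rcases hv with h | ⟨p, hp, _⟩
        · exact h
        · exact absurd hp List.not_mem_nil
      | cons x t =>
        exact absurd (hprobAux_len (PFA.redPOMDP P) σ 0 q (x :: t) (by simp)) h0
  | n+1, q, l, h0, hv => by
      cases l with
      | nil => exact absurd (hprobAux_nil_succ (PFA.redPOMDP P) σ n q) h0
      | cons x t =>
        obtain ⟨a, s'⟩ := x
        rw [show (PFA.redPOMDP P).hprob σ (n+1) (q, (a, s') :: t)
            = (PFA.redPOMDP P).hprobAux σ n s' t * σ.act (s', t) a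
              * (PFA.redPOMDP P).δ s' a q from hprobAux_cons _ σ n q a s' t] at h0
        have hA : (PFA.redPOMDP P).hprobAux σ n s' t ≠ 0 := fun hz => h0 (by rw [hz]; ring)
        have hδ : (PFA.redPOMDP P).δ s' a q ≠ 0 := fun hz => h0 (by rw [hz]; ring)
        rcases hv with h | ⟨p, hp, hpT⟩
        · exact h
        · have hvst : POMDP.visitsT (TRed S) ((s', t) : Hist _ _) := by
            rcases List.mem_cons.1 hp with rfl | hpt
            · exact Or.inl hpT
            · exact Or.inr ⟨p, hpt, hpT⟩
          have hs' : s' = stTarget S := hprob_visits_target n s' t hA hvst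
          subst hs'
          exact redδ_target_absorb P a q (by rw [← redPOMDP_δ]; exact hδ)

/-- The strategy playing √ always. -/
def sqrtStrat : Strategy (RSt S) (RAct A) Unit (PFA.redPOMDP P).obs where
  act := fun _ a => if a = Sum.inr 2 then (1:ℝ) else 0
  act_nonneg := fun _ a => by by_cases h : a = Sum.inr 2 <;> simp [h]
  act_sum := fun _ => by
    rw [Finset.sum_ite_eq' Finset.univ (Sum.inr 2 : RAct A) (fun _ => (1:ℝ))]
    simp
  obsBased := fun _ _ _ => rfl

def tgtHist (P : PFA S A) : ℕ → List (RAct A × RSt S)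
  | 0 => []
  | 1 => [(Sum.inr 2, Sum.inl (P.s0, true))]
  | n+2 => (Sum.inr 2, stTarget S) :: tgtHist P (n+1)

lemma hprob_sqrt_tgt : ∀ n : ℕ,
    (PFA.redPOMDP P).hprob (sqrtStrat P) (n+1) (stTarget S, tgtHist P (n+1)) = 1
  | 0 => by
      rw [show tgtHist P 1 = [(Sum.inr 2, Sum.inl (P.s0, true))] from rfl, POMDP.hprob,
        hprobAux_cons]
      simp [POMDP.hprobAux, PFA.redPOMDP, dirac, sqrtStrat, PFA.redδ, PFA.stTarget]
  | n+1 => by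
      rw [show tgtHist P (n+2) = (Sum.inr 2, stTarget S) :: tgtHist P (n+1) from rfl,
        POMDP.hprob, hprobAux_cons]
      have := hprob_sqrt_tgt n
      rw [POMDP.hprob] at this
      rw [this]
      simp [sqrtStrat, PFA.redδ, PFA.stTarget, dirac, PFA.redPOMDP]

lemma hprob_sqrt_unique : ∀ (n : ℕ) (q : RSt S) (l : List (RAct A × RSt S)),
    (PFA.redPOMDP P).hprob (sqrtStrat P) n (q, l) ≠ 0 →
      (n = 0 ∧ q = Sum.inl (P.s0, true) ∧ l = [])
        ∨ (q = stTarget S ∧ l = tgtHist P n ∧ 1 ≤ n)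
  | 0, q, l, h0 => by
      cases l with
      | nil =>
        left
        refine ⟨rfl, ?_, rfl⟩
        by_contra hne
        exact h0 (by simp [POMDP.hprob, POMDP.hprobAux, PFA.redPOMDP, dirac, hne])
      | cons x t =>
        exact absurd (hprobAux_len (PFA.redPOMDP P) (sqrtStrat P) 0 q (x :: t) (by simp)) h0
  | n+1, q, l, h0 => by
      cases l with
      | nil => exact absurd (hprobAux_nil_succ (PFA.redPOMDP P) (sqrtStrat P) n q) h0
      | cons x t =>
        obtain ⟨a, s'⟩ := x
        rw [show (PFA.redPOMDP P).hprob (sqrtStrat P) (n+1) (q, (a, s') :: t)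
            = (PFA.redPOMDP P).hprobAux (sqrtStrat P) n s' t * (sqrtStrat P).act (s', t) a
              * (PFA.redPOMDP P).δ s' a q from hprobAux_cons _ _ n q a s' t] at h0
        have hA : (PFA.redPOMDP P).hprobAux (sqrtStrat P) n s' t ≠ 0 :=
          fun hz => h0 (by rw [hz]; ring)
        have hact : (sqrtStrat P).act (s', t) a ≠ 0 := fun hz => h0 (by rw [hz]; ring)
        have hδ : (PFA.redPOMDP P).δ s' a q ≠ 0 := fun hz => h0 (by rw [hz]; ring)
        have ha : a = Sum.inr 2 := by
          by_contra hne
          exact hact (by simp [sqrtStrat, hne])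
        subst ha
        rcases hprob_sqrt_unique n s' t hA with ⟨rfl, rfl, rfl⟩ | ⟨rfl, rfl, hn⟩
        · right
          have hq : q = stTarget S := by
            by_contra hne
            refine hδ ?_
            rw [redPOMDP_δ]
            simp [PFA.redδ, dirac, hne]
          exact ⟨hq, rfl, le_refl 1⟩
        · right
          have hq : q = stTarget S := by
            refine redδ_target_absorb P (Sum.inr 2) q ?_
            rw [← redPOMDP_δ]
            exact hδ
          obtain ⟨m, rfl⟩ : ∃ m, n = m + 1 := ⟨n - 1, by omega⟩
          exact ⟨hq, rfl, by omega⟩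

lemma cost_tgtHist : ∀ n : ℕ,
    POMDP.totalCostH costRed ((stTarget S : RSt S), tgtHist P (n+1)) = 1
  | 0 => by
      show POMDP.totalCostAux costRed (stTarget S) [(Sum.inr 2, Sum.inl (P.s0, true))] = 1
      rw [show POMDP.totalCostAux costRed (stTarget S) [(Sum.inr 2, Sum.inl (P.s0, true))]
          = POMDP.totalCostAux costRed (Sum.inl (P.s0, true)) []
            + costRed (Sum.inl (P.s0, true)) (Sum.inr 2) from rfl]
      simp [POMDP.totalCostAux, costRed]
  | n+1 => by
      show POMDP.totalCostAux costRed (stTarget S)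
          ((Sum.inr 2, stTarget S) :: tgtHist P (n+1)) = 1
      rw [show POMDP.totalCostAux costRed (stTarget S)
            ((Sum.inr 2, stTarget S) :: tgtHist P (n+1))
          = POMDP.totalCostAux costRed (stTarget S) (tgtHist P (n+1))
            + costRed (stTarget S) (Sum.inr 2) from rfl]
      have := cost_tgtHist n
      rw [POMDP.totalCostH] at this
      rw [this]
      simp [costRed, PFA.stTarget]

lemma probReachBy_sqrt (n : ℕ) :
    (PFA.redPOMDP P).probReachBy (TRed S) (sqrtStrat P) (n+1) = 1 := by
  rw [POMDP.probReachBy]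
  rw [tsum_eq_single ((stTarget S, tgtHist P (n+1)) : Hist (RSt S) (RAct A)) ?_]
  · have hv : POMDP.visitsT (TRed S) ((stTarget S, tgtHist P (n+1)) : Hist (RSt S) (RAct A)) :=
      Or.inl rfl
    rw [if_pos hv]
    exact hprob_sqrt_tgt P n
  · rintro ⟨q, l⟩ hne
    by_cases hz : (PFA.redPOMDP P).hprob (sqrtStrat P) (n+1) (q, l) = 0
    · rw [hz, ite_self]
    · rcases hprob_sqrt_unique P (n+1) q l hz with ⟨h, _, _⟩ | ⟨rfl, rfl, _⟩
      · omega
      · exact absurd rfl hne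

lemma sqrt_AS : (PFA.redPOMDP P).AlmostSure (TRed S) (sqrtStrat P) := by
  show (PFA.redPOMDP P).probReach (TRed S) (sqrtStrat P) = 1
  rw [POMDP.probReach]
  have hb : BddAbove (Set.range fun n =>
      (PFA.redPOMDP P).probReachBy (TRed S) (sqrtStrat P) n) := by
    refine ⟨1, ?_⟩
    rintro x ⟨n, rfl⟩
    exact probReachBy_le_one _ _ _ n
  apply le_antisymm
  · exact ciSup_le fun n => probReachBy_le_one _ _ _ n
  · exact le_ciSup_of_le hb 1 (le_of_eq (probReachBy_sqrt P 0).symm)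

lemma expTotal_sqrt (n : ℕ) :
    (PFA.redPOMDP P).expTotalSteps costRed (sqrtStrat P) (n+1) = 1 := by
  rw [POMDP.expTotalSteps]
  rw [tsum_eq_single ((stTarget S, tgtHist P (n+1)) : Hist (RSt S) (RAct A)) ?_]
  · rw [hprob_sqrt_tgt P n, one_mul]
    exact cost_tgtHist P n
  · rintro ⟨q, l⟩ hne
    by_cases hz : (PFA.redPOMDP P).hprob (sqrtStrat P) (n+1) (q, l) = 0
    · rw [hz, zero_mul]
    · rcases hprob_sqrt_unique P (n+1) q l hz with ⟨h, _, _⟩ | ⟨rfl, rfl, _⟩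
      · omega
      · exact absurd rfl hne

lemma val_sqrt : (PFA.redPOMDP P).Val costRed (sqrtStrat P) = 1 := by
  rw [POMDP.Val]
  have hev : (fun n => (((PFA.redPOMDP P).expTotalSteps costRed (sqrtStrat P) n : ℝ) : EReal))
      =ᶠ[Filter.atTop] fun _ => (1 : EReal) := by
    refine Filter.eventually_atTop.2 ⟨1, fun n hn => ?_⟩
    obtain ⟨m, rfl⟩ : ∃ m, n = m + 1 := ⟨n - 1, by omega⟩
    show (((PFA.redPOMDP P).expTotalSteps costRed (sqrtStrat P) (m+1) : ℝ) : EReal) = (1 : EReal)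
    rw [expTotal_sqrt P m]
    norm_num
  rw [Filter.limsup_congr hev]
  exact Filter.limsup_const 1

lemma val_ge_one (hhalf : ∀ u : List A, P.accProb u ≤ 1/2)
    (hAS : (PFA.redPOMDP P).AlmostSure (TRed S) σ) :
    (1 : EReal) ≤ (PFA.redPOMDP P).Val costRed σ := by
  have hEn : ∀ n, (PFA.redPOMDP P).expTotalSteps costRed σ n
      = ∑ w ∈ listsLen (RAct A) n, EW P σ w := by
    intro n
    rw [expTotalSteps_eq, fiber_sum n
      (fun q l => (PFA.redPOMDP P).hprob σ n (q, l) * POMDP.totalCostH costRed (q, l))]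
    refine Finset.sum_congr rfl fun w hw => ?_
    rw [mem_listsLen] at hw
    subst hw
    rfl
  have hXR : ∀ n, (PFA.redPOMDP P).probReachBy (TRed S) σ n
      ≤ ∑ w ∈ listsLen (RAct A) n, muW P σ w (stTarget S) := by
    intro n
    rw [probReachBy_eq]
    have hle : ∀ q (l : List (RAct A × RSt S)),
        (if POMDP.visitsT (TRed S) ((q, l) : Hist _ _)
          then (PFA.redPOMDP P).hprob σ n (q, l) else 0)
          ≤ (if q = stTarget S then (PFA.redPOMDP P).hprob σ n (q, l) else 0) := by
      intro q l
      by_cases hz : (PFA.redPOMDP P).hprob σ n (q, l) = 0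
      · rw [hz, ite_self, ite_self]
      · by_cases hv : POMDP.visitsT (TRed S) ((q, l) : Hist _ _)
        · rw [if_pos hv, if_pos (hprob_visits_target P σ n q l hz hv)]
        · rw [if_neg hv]
          split_ifs
          · exact hprob_nonneg _ σ n _
          · exact le_refl 0
    calc ∑ q, ∑ l ∈ listsLen ((RAct A) × RSt S) n,
          (if POMDP.visitsT (TRed S) ((q, l) : Hist _ _)
            then (PFA.redPOMDP P).hprob σ n (q, l) else 0)
        ≤ ∑ q, ∑ l ∈ listsLen ((RAct A) × RSt S) n,
            (if q = stTarget S then (PFA.redPOMDP P).hprob σ n (q, l) else 0) :=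
          Finset.sum_le_sum fun q _ => Finset.sum_le_sum fun l _ => hle q l
      _ = ∑ w ∈ listsLen (RAct A) n, ∑ q, ∑ l ∈ pths (S := S) w,
            (if q = stTarget S then (PFA.redPOMDP P).hprob σ n (q, l) else 0) :=
          fiber_sum n _
      _ = ∑ w ∈ listsLen (RAct A) n, muW P σ w (stTarget S) := by
          refine Finset.sum_congr rfl fun w hw => ?_
          rw [mem_listsLen] at hw
          subst hw
          have hq : ∀ q : RSt S, ∑ l ∈ pths (S := S) w,
              (if q = stTarget S then (PFA.redPOMDP P).hprob σ w.length (q, l) else 0)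
                = if q = stTarget S then muW P σ w q else 0 := by
            intro q
            split_ifs
            · rfl
            · exact Finset.sum_eq_zero fun l _ => rfl
          rw [Finset.sum_congr rfl fun q _ => hq q,
            Finset.sum_ite_eq' Finset.univ (stTarget S) (muW P σ w)]
          simp
  have htot : ∀ n, ∑ w ∈ listsLen (RAct A) n, ∑ q, muW P σ w q = 1 := by
    intro n
    have h1 := sum_hprob (PFA.redPOMDP P) σ n
    rw [fiber_sum n (fun q l => (PFA.redPOMDP P).hprob σ n (q, l))] at h1
    rw [← h1]
    refine Finset.sum_congr rfl fun w hw => Finset.sum_congr rfl fun q _ => ?_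
    rw [mem_listsLen] at hw
    subst hw
    rfl
  have hmain : ∀ n, 2 * (PFA.redPOMDP P).probReachBy (TRed S) σ n - 1
      ≤ (PFA.redPOMDP P).expTotalSteps costRed σ n := by
    intro n
    have hK : 0 ≤ ∑ w ∈ listsLen (RAct A) n, KW P σ w :=
      Finset.sum_nonneg fun w _ => KW_nonneg P σ hhalf w
    have hKexp : ∑ w ∈ listsLen (RAct A) n, KW P σ w
        = (∑ w ∈ listsLen (RAct A) n, EW P σ w)
          + ((∑ w ∈ listsLen (RAct A) n, ∑ q, muW P σ w q * phi q)
          - (∑ w ∈ listsLen (RAct A) n, muW P σ w (stTarget S))) := by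
      rw [← Finset.sum_sub_distrib, ← Finset.sum_add_distrib]
      exact Finset.sum_congr rfl fun w _ => by rw [KW]; ring
    have hper : ∀ w : List (RAct A), ∑ q, muW P σ w q * phi q
        ≤ (∑ q, muW P σ w q) - muW P σ w (stTarget S) := by
      intro w
      have h1 : ∀ q : RSt S, muW P σ w q * phi q
          ≤ muW P σ w q - (if q = stTarget S then muW P σ w q else 0) := by
        intro q
        split_ifs with h
        · subst h
          have : phi (stTarget S) = 0 := by simp [phi, PFA.stTarget]
          rw [this, mul_zero]
          simp
        · have h2 : muW P σ w q * phi q ≤ muW P σ w q * 1 :=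
            mul_le_mul_of_nonneg_left (phi_le_one q) (muW_nonneg P σ w q)
          rw [mul_one] at h2
          linarith
      calc ∑ q, muW P σ w q * phi q
          ≤ ∑ q : RSt S, (muW P σ w q - (if q = stTarget S then muW P σ w q else 0)) :=
            Finset.sum_le_sum fun q _ => h1 q
        _ = (∑ q, muW P σ w q) - ∑ q : RSt S, (if q = stTarget S then muW P σ w q else 0) :=
            Finset.sum_sub_distrib _ _
        _ = (∑ q, muW P σ w q) - muW P σ w (stTarget S) := by
            rw [Finset.sum_ite_eq' Finset.univ (stTarget S) (muW P σ w)]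
            simp
    have hphi_bound : ∑ w ∈ listsLen (RAct A) n, ∑ q, muW P σ w q * phi q
        ≤ 1 - ∑ w ∈ listsLen (RAct A) n, muW P σ w (stTarget S) := by
      calc ∑ w ∈ listsLen (RAct A) n, ∑ q, muW P σ w q * phi q
          ≤ ∑ w ∈ listsLen (RAct A) n,
              ((∑ q, muW P σ w q) - muW P σ w (stTarget S)) :=
            Finset.sum_le_sum fun w _ => hper w
        _ = (∑ w ∈ listsLen (RAct A) n, ∑ q, muW P σ w q)
              - ∑ w ∈ listsLen (RAct A) n, muW P σ w (stTarget S) :=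
            Finset.sum_sub_distrib _ _
        _ = 1 - ∑ w ∈ listsLen (RAct A) n, muW P σ w (stTarget S) := by rw [htot n]
    have hXn := hXR n
    rw [hEn n]
    linarith [hK, hKexp, hphi_bound, hXn]
  have hRle1 := fun n => probReachBy_le_one (PFA.redPOMDP P) σ (TRed S) n
  have hmono := probReachBy_mono (PFA.redPOMDP P) σ (TRed S)
  have hbdd : BddAbove (Set.range fun n =>
      (PFA.redPOMDP P).probReachBy (TRed S) σ n) := by
    refine ⟨1, ?_⟩
    rintro x ⟨n, rfl⟩
    exact hRle1 n
  have hsup : (⨆ n, (PFA.redPOMDP P).probReachBy (TRed S) σ n) = 1 := hAS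
  have htend : Filter.Tendsto (fun n => (PFA.redPOMDP P).probReachBy (TRed S) σ n)
      Filter.atTop (nhds 1) := by
    rw [← hsup]
    exact tendsto_atTop_ciSup hmono hbdd
  have htend2 : Filter.Tendsto
      (fun n => 2 * (PFA.redPOMDP P).probReachBy (TRed S) σ n - 1)
      Filter.atTop (nhds 1) := by
    have h2 := (htend.const_mul (2:ℝ)).sub_const 1
    norm_num at h2
    exact h2
  have hlimsup : Filter.limsup
      (fun n => ((2 * (PFA.redPOMDP P).probReachBy (TRed S) σ n - 1 : ℝ) : EReal))
      Filter.atTop = (1 : EReal) := by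
    have hc : Filter.Tendsto
        (fun n => ((2 * (PFA.redPOMDP P).probReachBy (TRed S) σ n - 1 : ℝ) : EReal))
        Filter.atTop (nhds ((1 : ℝ) : EReal)) := EReal.tendsto_coe.2 htend2
    rw [show ((1 : ℝ) : EReal) = (1 : EReal) from rfl] at hc
    exact hc.limsup_eq
  rw [POMDP.Val, ← hlimsup]
  refine Filter.limsup_le_limsup ?_
  exact Filter.Eventually.of_forall fun n => EReal.coe_le_coe_iff.2 (hmain n)

end Red2

end Aux

/-- If no word is accepted by the PFA `P` with probability
strictly greater than `1/2`, then the optimal cost of the reduction POMDP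
equals `1`. -/
theorem optCost_eq_one_of_no_accProb_gt_half
    {S A : Type} [Fintype S] [Fintype A] [DecidableEq S] [DecidableEq A]
    (P : PFA S A) (hw : ¬ ∃ w : List A, 1 / 2 < P.accProb w) :
    (PFA.redPOMDP P).optCost (PFA.TRed S) PFA.costRed = (1 : EReal) := by
  have hhalf : ∀ u : List A, P.accProb u ≤ 1/2 := by
    intro u
    by_contra hgt
    push_neg at hgt
    exact hw ⟨u, hgt⟩
  apply le_antisymm
  · rw [POMDP.optCost]
    exact iInf_le_of_le ⟨Aux.sqrtStrat P, Aux.sqrt_AS P⟩ (le_of_eq (Aux.val_sqrt P))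
  · rw [POMDP.optCost]
    refine le_iInf ?_
    rintro ⟨σ, hσ⟩
    exact Aux.val_ge_one P σ hhalf hσ
end
end
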